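/- arXiv:1304.6605 — 8 statements merged into one kernel-verified Lean document; each statement's English description precedes it below -/
import Mathlib

section
/- Let g : 𝔻 → ℂ be holomorphic with g(ζ) = g(0) − conj(g(0))·ζ² − ζ·q(ζ), Re q ≥ 0 on 𝔻. If Re g'(0) = 0, then g(ζ) = g(0) − conj(g(0))·ζ² + i·a·ζ for some real a; in particular all Taylor coefficients of g of order ≥ 3 vanish and the second coefficient equals −conj(g(0)). -/
open Complex Metric

private lemma iter_ev {f h : ℂ → ℂ} {x : ℂ} (hfh : f =ᶠ[nhds x] h) (j : ℕ) :
    iteratedDeriv j f =ᶠ[nhds x] iteratedDeriv j h := by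
  induction j with
  | zero => simpa [iteratedDeriv_zero] using hfh
  | succ n ih => rw [iteratedDeriv_succ, iteratedDeriv_succ]; exact ih.deriv

private lemma iter_zero (n : ℕ) (x : ℂ) : iteratedDeriv n (fun _ : ℂ => (0:ℂ)) x = 0 := by
  induction n generalizing x with
  | zero => simp
  | succ m ih =>
      rw [iteratedDeriv_succ']
      simpa [deriv_const] using ih x

theorem stmt3 (g q : ℂ → ℂ)
    (hg : DifferentiableOn ℂ g (ball 0 1))
    (hq : DifferentiableOn ℂ q (ball 0 1))
    (hrep : ∀ ζ ∈ ball (0:ℂ) 1, g ζ = g 0 - (starRingEnd ℂ) (g 0) * ζ ^ 2 - ζ * q ζ)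
    (hre : ∀ ζ ∈ ball (0:ℂ) 1, 0 ≤ (q ζ).re)
    (h0 : (deriv g 0).re = 0) :
    (∃ a : ℝ, ∀ ζ ∈ ball (0:ℂ) 1,
        g ζ = g 0 - (starRingEnd ℂ) (g 0) * ζ ^ 2 + Complex.I * a * ζ) ∧
    (∀ j, 3 ≤ j → iteratedDeriv j g 0 = 0) ∧
    iteratedDeriv 2 g 0 / 2 = -(starRingEnd ℂ) (g 0) := by
  have h01 : (0:ℂ) ∈ ball (0:ℂ) 1 := by simp
  have hball : ball (0:ℂ) 1 ∈ nhds (0:ℂ) := isOpen_ball.mem_nhds h01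
  set c := (starRingEnd ℂ) (g 0) with hc
  -- q is analytic on the ball
  have hqa : AnalyticOnNhd ℂ q (ball 0 1) := hq.analyticOnNhd isOpen_ball
  -- derivative of g at 0 is -q 0
  have hq0 : DifferentiableAt ℂ q 0 := (hqa 0 h01).differentiableAt
  have hgev : g =ᶠ[nhds (0:ℂ)] (fun ζ => g 0 - c * ζ ^ 2 - ζ * q ζ) :=
    Filter.eventuallyEq_of_mem hball hrep
  have hder : HasDerivAt (fun ζ : ℂ => g 0 - c * ζ ^ 2 - ζ * q ζ) (-(q 0)) 0 := by
    have h1 : HasDerivAt (fun ζ : ℂ => g 0 - c * ζ ^ 2) (0 - c * ((2:ℕ) * (0:ℂ) ^ (2-1))) 0 :=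
      (hasDerivAt_const (0:ℂ) (g 0)).sub (((hasDerivAt_pow 2 (0:ℂ))).const_mul c)
    have h2 : HasDerivAt (fun ζ : ℂ => ζ * q ζ) (1 * q 0 + 0 * deriv q 0) 0 :=
      (hasDerivAt_id (0:ℂ)).mul hq0.hasDerivAt
    have := h1.sub h2
    refine this.congr_deriv ?_
    norm_num
  have hderiv_g0 : deriv g 0 = -(q 0) := by
    rw [hgev.deriv_eq]; exact hder.deriv
  have hq0re : (q 0).re = 0 := by
    have : (deriv g 0).re = -((q 0).re) := by rw [hderiv_g0]; simp
    linarith [h0, this]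
  -- q is constant on the ball
  have hconst : ∀ ζ ∈ ball (0:ℂ) 1, q ζ = q 0 := by
    rcases (hqa 0 h01).eventually_constant_or_nhds_le_map_nhds with hev | hmap
    · intro ζ hζ
      exact (hqa.eqOn_of_preconnected_of_eventuallyEq analyticOnNhd_const
        (convex_ball (0:ℂ) 1).isPreconnected h01 hev) hζ
    · exfalso
      have hH : {w : ℂ | 0 ≤ w.re} ∈ Filter.map q (nhds (0:ℂ)) := by
        refine Filter.mem_map.2 (Filter.mem_of_superset hball ?_)
        intro ζ hζ; exact hre ζ hζ
      have hH' : {w : ℂ | 0 ≤ w.re} ∈ nhds (q 0) := hmap hH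
      rcases Metric.mem_nhds_iff.1 hH' with ⟨ε, hε, hsub⟩
      have hmem : q 0 - (ε/2 : ℝ) ∈ ball (q 0) ε := by
        simp only [mem_ball, dist_eq]
        rw [show q 0 - (ε/2:ℝ) - q 0 = -((ε/2:ℝ):ℂ) by ring]
        rw [norm_neg, Complex.norm_real, Real.norm_eq_abs, abs_of_pos (by linarith)]
        linarith
      have := hsub hmem
      simp only [Set.mem_setOf_eq, sub_re, ofReal_re, hq0re] at this
      linarith
  -- the value a
  refine ⟨⟨-(q 0).im, ?_⟩, ?_, ?_⟩
  · intro ζ hζ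
    rw [hrep ζ hζ, hconst ζ hζ]
    have haq : Complex.I * ((-(q 0).im : ℝ) : ℂ) = -(q 0) := by
      apply Complex.ext <;> simp [hq0re]
    rw [haq]; ring
  all_goals {
    set b : ℂ := -(q 0) with hb
    have hev : g =ᶠ[nhds (0:ℂ)] (fun ζ => g 0 - c * ζ ^ 2 + b * ζ) := by
      refine Filter.eventuallyEq_of_mem hball ?_
      intro ζ hζ
      rw [hrep ζ hζ, hconst ζ hζ]; ring
    have hd1 : deriv (fun ζ : ℂ => g 0 - c * ζ ^ 2 + b * ζ) = fun ζ => b - 2 * c * ζ := by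
      funext ζ
      have h1 : HasDerivAt (fun ζ : ℂ => g 0 - c * ζ ^ 2 + b * ζ)
          (0 - c * ((2:ℕ) * ζ ^ (2-1)) + b * 1) ζ :=
        (((hasDerivAt_const ζ (g 0)).sub ((hasDerivAt_pow 2 ζ).const_mul c)).add
          ((hasDerivAt_id' ζ).const_mul b))
      rw [h1.deriv]; push_cast; ring
    have hd2 : deriv (fun ζ : ℂ => b - 2 * c * ζ) = fun _ => -(2 * c) := by
      funext ζ
      have h1 : HasDerivAt (fun ζ : ℂ => b - 2 * c * ζ) (0 - 2 * c * 1) ζ :=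
        (hasDerivAt_const ζ b).sub ((hasDerivAt_id ζ).const_mul (2 * c))
      rw [h1.deriv]; ring
    have hd3 : deriv (fun _ : ℂ => -(2 * c)) = fun _ : ℂ => (0:ℂ) := by
      funext ζ; simp
    first
    | · -- higher derivatives vanish
        intro j hj
        obtain ⟨n, rfl⟩ : ∃ n, j = n + 3 := ⟨j - 3, by omega⟩
        have := (iter_ev hev (n + 3)).self_of_nhds
        rw [this]
        show iteratedDeriv (n + 2 + 1) _ 0 = 0
        rw [iteratedDeriv_succ', hd1]
        show iteratedDeriv (n + 1 + 1) _ 0 = 0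
        rw [iteratedDeriv_succ', hd2, iteratedDeriv_succ', hd3, iter_zero]
    | · -- second derivative
        have := (iter_ev hev 2).self_of_nhds
        rw [this]
        show iteratedDeriv (1 + 1) _ 0 / 2 = -c
        rw [iteratedDeriv_succ', hd1, iteratedDeriv_one, hd2]
        ring
  }
end

section
/- Let X be a complex Banach space with open unit ball B, and let G : B → X be holomorphic satisfying Re⟨G(z), z*⟩ ≤ Re⟨G(0), z*⟩·(1 − ‖z‖²) for all z ∈ B and all supporting functionals z* (with ⟨z, z*⟩ = ‖z‖² = ‖z*‖²). Then for every unit vector v ∈ X and every v* ∈ X* with ⟨v, v*⟩ = ‖v*‖ = 1, one has Re⟨DG(0)v, v*⟩ ≤ 0. -/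
open Complex Metric Filter Topology

theorem stmt4 {X : Type*} [NormedAddCommGroup X] [NormedSpace ℂ X] [CompleteSpace X]
    (G : X → X) (hG : DifferentiableOn ℂ G (ball 0 1))
    (hgen : ∀ z ∈ ball (0:X) 1, ∀ zs : X →L[ℂ] ℂ,
      zs z = (‖z‖ ^ 2 : ℂ) → ‖zs‖ = ‖z‖ →
      (zs (G z)).re ≤ (zs (G 0)).re * (1 - ‖z‖ ^ 2)) :
    ∀ v : X, ‖v‖ = 1 → ∀ vs : X →L[ℂ] ℂ, vs v = 1 → ‖vs‖ = 1 →
      (vs (fderiv ℂ G 0 v)).re ≤ 0 := by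
  intro v hv vs hvsv hvs
  set L := fderiv ℂ G 0 with hL
  have h0 : (0:X) ∈ ball (0:X) 1 := by simp
  have hdiff : DifferentiableAt ℂ G 0 :=
    hG.differentiableAt (isOpen_ball.mem_nhds h0)
  have hF : HasFDerivAt G L 0 := hdiff.hasFDerivAt
  set g : ℝ → ℝ := fun r => (vs (G (r • v))).re with hgdef
  have hg : HasDerivAt g ((vs (L v)).re) 0 := by
    have h1 : HasDerivAt (fun r : ℝ => r • v) v 0 := by
      simpa using (hasDerivAt_id (0:ℝ)).smul_const v
    have h2 : HasDerivAt (fun r : ℝ => G (r • v)) (L v) 0 := by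
      have hF' : HasFDerivAt G (L.restrictScalars ℝ) ((0:ℝ) • v) := by
        simpa using hF.restrictScalars ℝ
      have := hF'.comp_hasDerivAt 0 h1
      simpa [Function.comp_def] using this
    have h3 : HasDerivAt (fun r : ℝ => vs (G (r • v))) (vs (L v)) 0 := by
      have := ((vs.restrictScalars ℝ).hasFDerivAt).comp_hasDerivAt 0 h2
      simpa [Function.comp_def] using this
    have h4 := (Complex.reCLM.hasFDerivAt).comp_hasDerivAt 0 h3
    simpa [Function.comp_def, hgdef] using h4
  have hg0 : g 0 = (vs (G 0)).re := by simp [hgdef]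
  have key : ∀ r : ℝ, 0 < r → r < 1 → g r ≤ g 0 * (1 - r ^ 2) := by
    intro r hr hr1
    have hnorm : ‖r • v‖ = r := by
      rw [norm_smul, hv, Real.norm_eq_abs, abs_of_pos hr, mul_one]
    have hmem : r • v ∈ ball (0:X) 1 := by
      simp [mem_ball, hnorm, hr1, dist_eq_norm]
    have happ : ((r : ℂ) • vs) (r • v) = (‖r • v‖ ^ 2 : ℂ) := by
      rw [hnorm]
      simp [vs.map_smul_of_tower, hvsv]
      ring
    have hnvs : ‖(r : ℂ) • vs‖ = ‖r • v‖ := by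
      rw [hnorm, norm_smul (r:ℂ) vs, hvs, mul_one, Complex.norm_real,
        Real.norm_eq_abs, abs_of_pos hr]
    have := hgen (r • v) hmem ((r : ℂ) • vs) happ hnvs
    rw [hnorm] at this
    have hlhs : (((r : ℂ) • vs) (G (r • v))).re = r * g r := by
      simp [hgdef]
    have hrhs : (((r : ℂ) • vs) (G 0)).re = r * g 0 := by
      simp [hg0]
    rw [hlhs, hrhs] at this
    have := this.trans_eq (by ring : r * g 0 * (1 - r ^ 2) = r * (g 0 * (1 - r ^ 2)))
    exact le_of_mul_le_mul_left this hr
  have hslope : Tendsto (slope g 0) (𝓝[>] (0:ℝ)) (𝓝 ((vs (L v)).re)) :=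
    (hasDerivAt_iff_tendsto_slope.mp hg).mono_left
      (nhdsWithin_mono _ (fun x hx => ne_of_gt hx))
  have hbound : ∀ᶠ r in 𝓝[>] (0:ℝ), slope g 0 r ≤ -r * g 0 := by
    filter_upwards [Ioo_mem_nhdsGT_of_mem (Set.left_mem_Ico.mpr one_pos)] with r hr
    have h1 := key r hr.1 hr.2
    rw [slope_def_field, sub_zero, div_le_iff₀ hr.1]
    nlinarith [h1]
  have hzero : Tendsto (fun r : ℝ => -r * g 0) (𝓝[>] (0:ℝ)) (𝓝 0) := by
    have : Tendsto (fun r : ℝ => -r * g 0) (𝓝 (0:ℝ)) (𝓝 (-(0:ℝ) * g 0)) := by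
      exact (tendsto_id.neg.mul_const _)
    simpa using this.mono_left nhdsWithin_le_nhds
  exact le_of_tendsto_of_tendsto hslope hzero hbound
end

section
/- Let X be a complex Banach space with open unit ball B, and let G : B → X be an infinitesimal generator (i.e., Re⟨G(z), z*⟩ ≤ Re⟨G(0), z*⟩·(1−‖z‖²) for all z ∈ B). Fix a unit vector v ∈ X and a supporting functional v* with ⟨v, v*⟩ = 1 = ‖v*‖. Then the holomorphic function g : 𝔻 → ℂ, g(ζ) := ⟨G(ζv), v*⟩, is an infinitesimal generator on the unit disc; i.e., g(ζ) = g(0) − conj(g(0))ζ² − ζq(ζ) for some holomorphic q with Re q ≥ 0 on 𝔻. -/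
open Complex Metric

theorem stmt5 {X : Type*} [NormedAddCommGroup X] [NormedSpace ℂ X] [CompleteSpace X]
    (G : X → X) (hG : DifferentiableOn ℂ G (ball 0 1))
    (hgen : ∀ z ∈ ball (0:X) 1, ∀ zs : X →L[ℂ] ℂ,
      zs z = (‖z‖ ^ 2 : ℂ) → ‖zs‖ = ‖z‖ →
      (zs (G z)).re ≤ (zs (G 0)).re * (1 - ‖z‖ ^ 2))
    (v : X) (hv : ‖v‖ = 1) (vs : X →L[ℂ] ℂ) (hvs1 : vs v = 1) (hvs2 : ‖vs‖ = 1) :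
    ∃ q : ℂ → ℂ, DifferentiableOn ℂ q (ball 0 1) ∧
      (∀ ζ ∈ ball (0:ℂ) 1, 0 ≤ (q ζ).re) ∧
      ∀ ζ ∈ ball (0:ℂ) 1,
        vs (G (ζ • v)) = vs (G 0) - (starRingEnd ℂ) (vs (G 0)) * ζ ^ 2 - ζ * q ζ := by
  set g0 : ℂ := vs (G 0) with hg0
  set f : ℂ → ℂ := fun ζ => g0 - (starRingEnd ℂ) g0 * ζ ^ 2 - vs (G (ζ • v)) with hf
  have hmem : ∀ ζ : ℂ, ζ ∈ ball (0:ℂ) 1 → ζ • v ∈ ball (0:X) 1 := by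
    intro ζ hζ
    simp only [mem_ball, dist_zero_right] at hζ ⊢
    rw [norm_smul, hv, mul_one]
    exact hζ
  have hfd : DifferentiableOn ℂ f (ball 0 1) := by
    apply DifferentiableOn.sub
    · apply DifferentiableOn.sub (differentiableOn_const _)
      exact ((differentiable_pow 2).differentiableOn).const_mul _
    · apply (vs.differentiable.comp_differentiableOn _)
      exact hG.comp ((differentiable_id.smul_const v).differentiableOn) hmem
  have hf0 : f 0 = 0 := by simp [hf, hg0]
  -- key inequality
  have hkey : ∀ ζ ∈ ball (0:ℂ) 1, 0 ≤ ((starRingEnd ℂ) ζ * f ζ).re := by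
    intro ζ hζ
    have hz := hmem ζ hζ
    have hnorm : ‖ζ • v‖ = ‖ζ‖ := by rw [norm_smul, hv, mul_one]
    have hcz : (starRingEnd ℂ) ζ * ζ = (‖ζ‖ : ℂ) ^ 2 := Complex.conj_mul' ζ
    have h1 : (((starRingEnd ℂ) ζ • vs) (ζ • v)) = (‖ζ • v‖ ^ 2 : ℂ) := by
      simp only [ContinuousLinearMap.smul_apply, map_smul, hvs1, smul_eq_mul, mul_one, hnorm]
      exact Complex.mul_conj' ζ
    have h2 : ‖(starRingEnd ℂ) ζ • vs‖ = ‖ζ • v‖ := by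
      rw [hnorm, norm_smul ((starRingEnd ℂ) ζ) vs, hvs2, mul_one]
      simp
    have hle := hgen (ζ • v) hz ((starRingEnd ℂ) ζ • vs) h1 h2
    simp only [ContinuousLinearMap.smul_apply, smul_eq_mul, hnorm] at hle
    have expand : (starRingEnd ℂ) ζ * f ζ
        = (starRingEnd ℂ) ζ * g0 - ((‖ζ‖ ^ 2 : ℝ) : ℂ) * ((starRingEnd ℂ) g0 * ζ)
          - (starRingEnd ℂ) ζ * vs (G (ζ • v)) := by
      simp only [hf]
      rw [show ((‖ζ‖ ^ 2 : ℝ) : ℂ) = (starRingEnd ℂ) ζ * ζ by rw [hcz]; push_cast; ring]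
      ring
    have hre : ((starRingEnd ℂ) g0 * ζ).re = ((starRingEnd ℂ) ζ * g0).re := by
      have : (starRingEnd ℂ) ((starRingEnd ℂ) g0 * ζ) = (starRingEnd ℂ) ζ * g0 := by
        simp [mul_comm]
      rw [← this, Complex.conj_re]
    rw [expand]
    simp only [Complex.sub_re, Complex.re_ofReal_mul, hre]
    nlinarith [hle]
  -- real part of f z / z
  have hdiv : ∀ z : ℂ, z ≠ 0 → (f z / z).re = ((starRingEnd ℂ) z * f z).re / ‖z‖ ^ 2 := by
    intro z hz0
    have hconj : (starRingEnd ℂ) z ≠ 0 := by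
      simpa using hz0
    have : f z / z = ((starRingEnd ℂ) z * f z) / (((‖z‖ ^ 2 : ℝ)) : ℂ) := by
      rw [show (((‖z‖ ^ 2 : ℝ)) : ℂ) = (starRingEnd ℂ) z * z by
        rw [Complex.conj_mul']; push_cast; ring]
      rw [mul_div_mul_left _ _ hconj]
    rw [this, Complex.div_ofReal_re]
  have hslope : ∀ z : ℂ, z ≠ 0 → dslope f 0 z = f z / z := by
    intro z hz0
    rw [dslope_of_ne f hz0, slope_def_field, hf0]
    simp [div_eq_inv_mul]
  have hana : AnalyticAt ℂ f 0 := (hfd.analyticOnNhd isOpen_ball) 0 (by simp)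
  obtain ⟨p, hp⟩ := hana
  have hda : AnalyticAt ℂ (dslope f 0) 0 := hp.has_fpower_series_dslope_fslope.analyticAt
  refine ⟨dslope f 0, ?_, ?_, ?_⟩
  · intro x hx
    rcases eq_or_ne x 0 with rfl | hne
    · exact hda.differentiableAt.differentiableWithinAt
    · exact (differentiableWithinAt_dslope_of_ne hne).2 (hfd x hx)
  · intro ζ hζ
    rcases eq_or_ne ζ 0 with rfl | hne
    · have htend : Filter.Tendsto (fun z => (dslope f 0 z).re) (nhdsWithin 0 {(0:ℂ)}ᶜ)
          (nhds ((dslope f 0 0).re)) :=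
        (Complex.continuous_re.continuousAt.comp hda.continuousAt).continuousWithinAt.tendsto
      refine ge_of_tendsto htend ?_
      have hball : ball (0:ℂ) 1 ∈ nhdsWithin (0:ℂ) {(0:ℂ)}ᶜ :=
        Filter.mem_of_superset (nhdsWithin_le_nhds (ball_mem_nhds 0 one_pos)) (fun _ h => h)
      filter_upwards [hball, self_mem_nhdsWithin] with z hz hz0
      rw [hslope z hz0, hdiv z hz0]
      exact div_nonneg (hkey z hz) (by positivity)
    · rw [hslope ζ hne, hdiv ζ hne]
      exact div_nonneg (hkey ζ hζ) (by positivity)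
  · intro ζ hζ
    rcases eq_or_ne ζ 0 with rfl | hne
    · simp [hg0]
    · rw [hslope ζ hne, mul_div_cancel₀ _ hne, hf]
      simp only [hg0]
      ring
end

section
/- Let X be a complex Banach space with open unit ball B and let F : B → X be holomorphic. Suppose there exist ε > 0, real numbers θ, a, b such that Re(e^{iθ}⟨F(z), z*⟩) ≤ a‖z‖² + b(1 − ‖z‖²) for all z with 1−ε < ‖z‖ < 1. Then the map G(z) := e^{iθ}F(z) − a·z is an infinitesimal generator on B, i.e., Re⟨G(z), z*⟩ ≤ Re⟨G(0), z*⟩·(1−‖z‖²) for all z ∈ B; consequently Re(e^{iθ}⟨F(z), z*⟩) ≤ a‖z‖² + ‖F(0)‖·(1−‖z‖²) holds for all z ∈ B. -/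
open Complex Metric

-- Core lemma: the maximum-principle argument on the disc.
-- h holomorphic on unit disc, Re(conj w * h w) ≤ K*(1-|w|^2) near the boundary,
-- then Re (h r) ≤ (h 0).re * (1 - r^2) for 0 < r < 1.
theorem disc_key (h : ℂ → ℂ) (hh : DifferentiableOn ℂ h (ball 0 1))
    (K ε : ℝ) (hε : 0 < ε)
    (hbd : ∀ w : ℂ, 1 - ε < ‖w‖ → ‖w‖ < 1 →
      ((starRingEnd ℂ) w * h w).re ≤ K * (1 - ‖w‖ ^ 2))
    (r : ℝ) (hr0 : 0 < r) (hr1 : r < 1) :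
    (h r).re ≤ (h 0).re * (1 - r ^ 2) := by
  set ψ : ℂ → ℂ := fun w => dslope h 0 w + (starRingEnd ℂ) (h 0) * w with hψdef
  have hψ : DifferentiableOn ℂ ψ (ball 0 1) := by
    refine DifferentiableOn.add ?_ ?_
    · exact (Complex.differentiableOn_dslope (ball_mem_nhds 0 one_pos)).mpr hh
    · exact (differentiable_id.const_mul _).differentiableOn
  set C : ℝ := |K| + ‖h 0‖ with hC
  have hC0 : 0 ≤ C := add_nonneg (abs_nonneg _) (norm_nonneg _)
  -- pointwise bound near boundary
  have hψbd : ∀ w : ℂ, 1 - ε < ‖w‖ → ‖w‖ < 1 → w ≠ 0 →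
      (ψ w).re ≤ (1 - ‖w‖ ^ 2) / ‖w‖ ^ 2 * C := by
    intro w h1 h2 h0
    have haw : (0:ℝ) < ‖w‖ := norm_pos_iff.mpr h0
    have hA : (0:ℝ) < ‖w‖ ^ 2 := by positivity
    have hrew : ψ w = ((starRingEnd ℂ) w * h w - (starRingEnd ℂ) w * h 0) /
        ((‖w‖ ^ 2 : ℝ) : ℂ) + (starRingEnd ℂ) (h 0) * w := by
      rw [hψdef]
      simp only
      rw [dslope_of_ne _ h0, slope_def_field]
      congr 1
      have hcast : ((‖w‖ ^ 2 : ℝ) : ℂ) = w * (starRingEnd ℂ) w := by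
        rw [Complex.mul_conj, ← Complex.sq_norm]
      have hconj0 : (starRingEnd ℂ) w ≠ 0 := by
        simpa using h0
      rw [hcast, sub_zero, div_eq_div_iff h0 (mul_ne_zero h0 hconj0)]
      ring
    have hre : (ψ w).re = (((starRingEnd ℂ) w * h w).re - ((starRingEnd ℂ) w * h 0).re)
        / ‖w‖ ^ 2 + ((starRingEnd ℂ) w * h 0).re := by
      rw [hrew]
      have : ((starRingEnd ℂ) (h 0) * w).re = ((starRingEnd ℂ) w * h 0).re := by
        rw [← Complex.conj_re ((starRingEnd ℂ) (h 0) * w)]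
        rw [map_mul]
        simp [mul_comm]
      rw [Complex.add_re, Complex.div_ofReal_re, Complex.sub_re, this]
    have h3 : ((starRingEnd ℂ) w * h w).re ≤ K * (1 - ‖w‖ ^ 2) := hbd w h1 h2
    have h4 : |((starRingEnd ℂ) w * h 0).re| ≤ ‖h 0‖ := by
      calc |((starRingEnd ℂ) w * h 0).re| ≤ ‖(starRingEnd ℂ) w * h 0‖ :=
            Complex.abs_re_le_norm _
        _ = ‖w‖ * ‖h 0‖ := by rw [norm_mul, Complex.norm_conj]
        _ ≤ 1 * ‖h 0‖ := by
            apply mul_le_mul_of_nonneg_right h2.le (norm_nonneg _)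
        _ = ‖h 0‖ := one_mul _
    rw [hre]
    have hwle : (0:ℝ) ≤ 1 - ‖w‖ ^ 2 := by nlinarith [norm_nonneg w]
    rw [div_add' _ _ _ hA.ne', div_mul_eq_mul_div, div_le_div_iff₀ hA hA]
    obtain ⟨hY1, hY2⟩ := abs_le.mp h4
    have e1 : -(((starRingEnd ℂ) w * h 0).re) * (1 - ‖w‖ ^ 2) ≤
        ‖h 0‖ * (1 - ‖w‖ ^ 2) :=
      mul_le_mul_of_nonneg_right (by linarith) hwle
    have e2 : K * (1 - ‖w‖ ^ 2) ≤ |K| * (1 - ‖w‖ ^ 2) :=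
      mul_le_mul_of_nonneg_right (le_abs_self K) hwle
    have e3 : ((starRingEnd ℂ) w * h w).re - ((starRingEnd ℂ) w * h 0).re +
        ((starRingEnd ℂ) w * h 0).re * ‖w‖ ^ 2 ≤ (1 - ‖w‖ ^ 2) * C := by
      rw [hC]; nlinarith [e1, e2, h3]
    nlinarith [mul_le_mul_of_nonneg_right e3 hA.le]
  -- maximum principle on ball of radius ρ
  set m : ℝ := max (max r (1 - ε)) (1/2) with hm
  have hm1 : m < 1 := by
    rw [hm]
    simp only [max_lt_iff]
    refine ⟨⟨hr1, by linarith⟩, by norm_num⟩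
  have hmax : ∀ ρ : ℝ, m < ρ → ρ < 1 → (ψ (r:ℂ)).re ≤ (1 - ρ ^ 2) / ρ ^ 2 * C := by
    intro ρ hρm hρ1
    have hρ0 : (0:ℝ) < ρ := lt_trans (by rw [hm]; positivity) hρm
    have hrρ : r < ρ := lt_of_le_of_lt (le_max_of_le_left (le_max_left _ _)) hρm
    have hερ : 1 - ε < ρ := lt_of_le_of_lt (le_max_of_le_left (le_max_right _ _)) hρm
    set M : ℝ := (1 - ρ ^ 2) / ρ ^ 2 * C with hM
    have hsub : closure (ball (0:ℂ) ρ) ⊆ ball (0:ℂ) 1 := by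
      rw [closure_ball (0:ℂ) hρ0.ne']
      exact fun x hx => by
        simp only [mem_closedBall, mem_ball, dist_zero_right] at *
        linarith
    have hdiff : DiffContOnCl ℂ (fun w => Complex.exp (ψ w)) (ball (0:ℂ) ρ) :=
      DifferentiableOn.diffContOnCl ((hψ.mono hsub).cexp)
    have hfr : ∀ w ∈ frontier (ball (0:ℂ) ρ), ‖Complex.exp (ψ w)‖ ≤ Real.exp M := by
      intro w hw
      rw [frontier_ball (0:ℂ) hρ0.ne'] at hw
      have habs : ‖w‖ = ρ := by
        simpa using (mem_sphere_zero_iff_norm.mp hw)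
      have hw0 : w ≠ 0 := by
        intro h'; rw [h'] at habs; simp at habs; linarith
      have := hψbd w (by rw [habs]; exact hερ) (by rw [habs]; exact hρ1) hw0
      rw [habs] at this
      rw [Complex.norm_exp]
      exact Real.exp_le_exp.mpr this
    have hmem : (r:ℂ) ∈ closure (ball (0:ℂ) ρ) := by
      apply subset_closure
      simp only [mem_ball, dist_zero_right, Complex.norm_real, Real.norm_eq_abs,
        abs_of_pos hr0]
      exact hrρ
    have := Complex.norm_le_of_forall_mem_frontier_norm_le isBounded_ball hdiff hfr hmem
    rw [Complex.norm_exp] at this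
    exact Real.exp_le_exp.mp this
  -- limit ρ → 1⁻
  have hψr : (ψ (r:ℂ)).re ≤ 0 := by
    have htend : Filter.Tendsto (fun ρ : ℝ => (1 - ρ ^ 2) / ρ ^ 2 * C) (nhdsWithin 1 (Set.Iio 1))
        (nhds 0) := by
      have hcont : ContinuousAt (fun ρ : ℝ => (1 - ρ ^ 2) / ρ ^ 2 * C) 1 := by
        apply ContinuousAt.mul _ continuousAt_const
        apply ContinuousAt.div (by fun_prop) (by fun_prop)
        norm_num
      have : (fun ρ : ℝ => (1 - ρ ^ 2) / ρ ^ 2 * C) 1 = 0 := by norm_num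
      rw [← this]
      exact hcont.continuousWithinAt
    refine ge_of_tendsto htend ?_
    filter_upwards [Ioo_mem_nhdsLT_of_mem (Set.mem_Ioc.mpr ⟨hm1, le_refl 1⟩)] with ρ hρ
    exact hmax ρ hρ.1 hρ.2
  -- unfold ψ at r
  have hrne : ((r:ℝ):ℂ) ≠ 0 := by
    simp only [ne_eq, Complex.ofReal_eq_zero]
    exact hr0.ne'
  have hψreq : ψ (r:ℂ) = (h r - h 0) / r + (starRingEnd ℂ) (h 0) * r := by
    rw [hψdef]
    simp only
    rw [dslope_of_ne _ hrne, slope_def_field, sub_zero]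
  have hre2 : (ψ (r:ℂ)).re = ((h r).re - (h 0).re) / r + (h 0).re * r := by
    rw [hψreq]
    rw [Complex.add_re, Complex.div_ofReal_re, Complex.sub_re]
    congr 1
    rw [← Complex.conj_re ((starRingEnd ℂ) (h 0) * (r:ℂ))]
    simp [mul_comm]
  rw [hre2] at hψr
  have h6 : ((h ↑r).re - (h 0).re + (h 0).re * r * r) / r ≤ 0 := by
    have : ((h ↑r).re - (h 0).re + (h 0).re * r * r) / r
        = ((h ↑r).re - (h 0).re) / r + (h 0).re * r := by
      field_simp
    rw [this]
    exact hψr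
  have h5 : (h ↑r).re - (h 0).re + (h 0).re * r * r ≤ 0 := by
    by_contra hcon
    push_neg at hcon
    have := div_pos hcon hr0
    linarith
  nlinarith [h5]

theorem stmt7 {X : Type*} [NormedAddCommGroup X] [NormedSpace ℂ X] [CompleteSpace X]
    (F : X → X) (hF : DifferentiableOn ℂ F (ball 0 1))
    (θ a b ε : ℝ) (hε : 0 < ε)
    (hpd : ∀ z : X, 1 - ε < ‖z‖ → ‖z‖ < 1 → ∀ zs : X →L[ℂ] ℂ,
      zs z = (‖z‖ ^ 2 : ℂ) → ‖zs‖ = ‖z‖ →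
      (Complex.exp (θ * Complex.I) * zs (F z)).re ≤ a * ‖z‖ ^ 2 + b * (1 - ‖z‖ ^ 2)) :
    (∀ z ∈ ball (0:X) 1, ∀ zs : X →L[ℂ] ℂ,
      zs z = (‖z‖ ^ 2 : ℂ) → ‖zs‖ = ‖z‖ →
      (zs (Complex.exp (θ * Complex.I) • F z - (a : ℂ) • z)).re ≤
        (zs (Complex.exp (θ * Complex.I) • F 0)).re * (1 - ‖z‖ ^ 2)) ∧
    (∀ z ∈ ball (0:X) 1, ∀ zs : X →L[ℂ] ℂ,
      zs z = (‖z‖ ^ 2 : ℂ) → ‖zs‖ = ‖z‖ →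
      (Complex.exp (θ * Complex.I) * zs (F z)).re ≤ a * ‖z‖ ^ 2 + ‖F 0‖ * (1 - ‖z‖ ^ 2)) := by
  have key : ∀ z ∈ ball (0:X) 1, ∀ zs : X →L[ℂ] ℂ,
      zs z = (‖z‖ ^ 2 : ℂ) → ‖zs‖ = ‖z‖ →
      (zs (Complex.exp (θ * Complex.I) • F z - (a : ℂ) • z)).re ≤
        (zs (Complex.exp (θ * Complex.I) • F 0)).re * (1 - ‖z‖ ^ 2) := by
    intro z hz zs hzz hzn
    by_cases hz0 : z = 0
    · have : zs = 0 := by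
        rw [hz0, norm_zero] at hzn
        exact norm_eq_zero.mp hzn
      simp [this, hz0]
    · set r : ℝ := ‖z‖ with hrdef
      have hr0 : 0 < r := norm_pos_iff.mpr hz0
      have hr1 : r < 1 := by simpa [mem_ball, dist_zero_right] using hz
      have hrC : ((r:ℝ):ℂ) ≠ 0 := by
        simp only [ne_eq, Complex.ofReal_eq_zero]; exact hr0.ne'
      set h : ℂ → ℂ :=
        fun w => Complex.exp (θ * Complex.I) * zs (F ((w / (r:ℂ)) • z)) - (a:ℂ) * w * r
        with hhdef
      have hnorm : ∀ w : ℂ, ‖(w / (r:ℂ)) • z‖ = ‖w‖ := by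
        intro w
        rw [norm_smul]
        simp only [norm_div, Complex.norm_real, Real.norm_eq_abs, abs_of_pos hr0]
        field_simp
        rfl
      have hmap : Set.MapsTo (fun w : ℂ => (w / (r:ℂ)) • z) (ball 0 1) (ball (0:X) 1) := by
        intro w hw
        simp only [mem_ball, dist_zero_right] at *
        rw [hnorm w]
        simpa using hw
      have hh : DifferentiableOn ℂ h (ball 0 1) := by
        have hT : Differentiable ℂ (fun w : ℂ => (w / (r:ℂ)) • z) :=
          (differentiable_id.div_const _).smul_const z
        have h1 : DifferentiableOn ℂ (fun w : ℂ => F ((w / (r:ℂ)) • z)) (ball 0 1) :=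
          hF.comp hT.differentiableOn hmap
        have h2 : DifferentiableOn ℂ (fun w : ℂ => zs (F ((w / (r:ℂ)) • z))) (ball 0 1) :=
          zs.differentiable.comp_differentiableOn h1
        exact (h2.const_mul _).sub (by fun_prop)
      have hbd : ∀ w : ℂ, 1 - min ε (1/2) < ‖w‖ → ‖w‖ < 1 →
          ((starRingEnd ℂ) w * h w).re ≤ (r * b) * (1 - ‖w‖ ^ 2) := by
        intro w h1 h2
        have haw : (1:ℝ)/2 < ‖w‖ := by
          have : 1 - min ε (1/2) ≥ 1/2 := by
            have := min_le_right ε (1/2); linarith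
          linarith
        have hw0 : w ≠ 0 := by
          intro h'
          rw [h'] at haw; simp at haw; linarith
        set u : X := (w / (r:ℂ)) • z with hudef
        have hun : ‖u‖ = ‖w‖ := hnorm w
        set ws : X →L[ℂ] ℂ := ((starRingEnd ℂ) w / (r:ℂ)) • zs with hwsdef
        have hws1 : ws u = (‖u‖ ^ 2 : ℂ) := by
          rw [hwsdef, hudef]
          simp only [ContinuousLinearMap.smul_apply, map_smul, smul_eq_mul]
          rw [hzz, hun]
          have : ((‖w‖ : ℝ) : ℂ) ^ 2 = w * (starRingEnd ℂ) w := by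
            rw [← Complex.ofReal_pow, Complex.sq_norm, Complex.mul_conj]
          rw [this]
          have : ((‖z‖:ℝ):ℂ) ^ 2 = (r:ℂ) * (r:ℂ) := by rw [← hrdef]; ring
          rw [this]
          field_simp
        have hws2 : ‖ws‖ = ‖u‖ := by
          rw [hwsdef, hun]
          rw [show ‖((starRingEnd ℂ) w / (r:ℂ)) • zs‖ = ‖(starRingEnd ℂ) w / (r:ℂ)‖ * ‖zs‖
            from norm_smul ((starRingEnd ℂ) w / (r:ℂ)) zs, hzn]
          simp only [norm_div, Complex.norm_conj, Complex.norm_real, Real.norm_eq_abs,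
            abs_of_pos hr0]
          field_simp
        have hpd' := hpd u (by rw [hun]; linarith [min_le_left ε (1/2)]) (by rw [hun]; exact h2)
          ws hws1 hws2
        rw [hun] at hpd'
        have hwsu : ws (F u) = (starRingEnd ℂ) w / (r:ℂ) * zs (F u) := by
          rw [hwsdef]; simp
        rw [hwsu] at hpd'
        -- multiply hpd' by r
        have hkey : ((starRingEnd ℂ) w * h w).re
            = r * (Complex.exp (θ * Complex.I) * ((starRingEnd ℂ) w / (r:ℂ) * zs (F u))).re
              - a * r * ‖w‖ ^ 2 := by
          rw [hhdef]
          simp only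
          rw [← hudef]
          have e1 : (starRingEnd ℂ) w * (Complex.exp (θ * Complex.I) * zs (F u) - (a:ℂ) * w * r)
              = (r:ℂ) * (Complex.exp (θ * Complex.I) * ((starRingEnd ℂ) w / (r:ℂ) * zs (F u)))
                - (a:ℂ) * (r:ℂ) * (w * (starRingEnd ℂ) w) := by
            field_simp
          rw [e1, Complex.sub_re, Complex.mul_conj, ← Complex.sq_norm]
          have e2 : ((a:ℂ) * (r:ℂ) * ((‖w‖ ^ 2 : ℝ) : ℂ)).re
              = a * r * ‖w‖ ^ 2 := by
            norm_cast
          rw [e2]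
          congr 1
          exact Complex.re_ofReal_mul _ _
        rw [hkey]
        nlinarith [hpd', hr0]
      have hmin : 0 < min ε (1/2) := by positivity
      have hdk := disc_key h hh (r * b) (min ε (1/2)) hmin hbd r hr0 hr1
      -- translate back
      have hhr : h (r:ℂ) = Complex.exp (θ * Complex.I) * zs (F z) - (a:ℂ) * r * r := by
        rw [hhdef]
        simp only
        rw [div_self hrC, one_smul]
      have hh0 : h 0 = Complex.exp (θ * Complex.I) * zs (F 0) := by
        rw [hhdef]
        simp
      have hL : (zs (Complex.exp (θ * Complex.I) • F z - (a : ℂ) • z)).re = (h (r:ℂ)).re := by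
        rw [hhr, map_sub, map_smul, map_smul, hzz]
        simp only [smul_eq_mul, Complex.sub_re]
        congr 1
        have : (a:ℂ) * ((‖z‖:ℝ):ℂ) ^ 2 = (a:ℂ) * (r:ℂ) * (r:ℂ) := by
          rw [← hrdef]; ring
        rw [this]
      have hR : (zs (Complex.exp (θ * Complex.I) • F 0)).re = (h 0).re := by
        rw [hh0, map_smul]
        simp
      rw [hL, hR]
      exact hdk
  refine ⟨key, ?_⟩
  intro z hz zs hzz hzn
  have h1 := key z hz zs hzz hzn
  have hr1 : ‖z‖ < 1 := by simpa [mem_ball, dist_zero_right] using hz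
  have hLs : (zs (Complex.exp (θ * Complex.I) • F z - (a : ℂ) • z)).re
      = (Complex.exp (θ * Complex.I) * zs (F z)).re - a * ‖z‖ ^ 2 := by
    rw [map_sub, map_smul, map_smul, hzz]
    simp only [smul_eq_mul, Complex.sub_re]
    congr 1
    have : (a:ℂ) * ((‖z‖:ℝ):ℂ) ^ 2 = ((a * ‖z‖ ^ 2 : ℝ) : ℂ) := by push_cast; ring
    rw [this, Complex.ofReal_re]
  have hRs : (zs (Complex.exp (θ * Complex.I) • F 0)).re ≤ ‖F 0‖ := by
    calc (zs (Complex.exp (θ * Complex.I) • F 0)).re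
        ≤ ‖zs (Complex.exp (θ * Complex.I) • F 0)‖ := Complex.re_le_norm _
      _ = ‖zs (Complex.exp (θ * Complex.I) • F 0)‖ := rfl
      _ ≤ ‖zs‖ * ‖Complex.exp (θ * Complex.I) • F 0‖ := zs.le_opNorm _
      _ = ‖z‖ * (‖Complex.exp (θ * Complex.I)‖ * ‖F 0‖) := by rw [hzn, norm_smul]
      _ = ‖z‖ * ‖F 0‖ := by
          rw [Complex.norm_exp_ofReal_mul_I, one_mul]
      _ ≤ 1 * ‖F 0‖ := mul_le_mul_of_nonneg_right hr1.le (norm_nonneg _)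
      _ = ‖F 0‖ := one_mul _
  have hnn : (0:ℝ) ≤ 1 - ‖z‖ ^ 2 := by nlinarith [norm_nonneg z]
  have := mul_le_mul_of_nonneg_right hRs hnn
  rw [hLs] at h1
  linarith
end

section
/- Let g : 𝔻 → ℂ be holomorphic such that for some ε > 0 and b ∈ ℝ, Re(g(ζ)·conj(ζ)) ≤ b(1−|ζ|²) whenever 1−ε < |ζ| < 1. Then for every w ∈ 𝔻 and every r > 0, the equation ζ − w − r·g(ζ) = 0 has exactly one solution ζ ∈ 𝔻, and consequently g is an infinitesimal generator on 𝔻. -/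
set_option maxHeartbeats 1000000

open Complex Metric Set

noncomputable section AuxStmt8

/-- Continuity of `deriv f / f` at points of an open set where `f` is differentiable and nonzero. -/
lemma logDeriv_differentiableAt {f : ℂ → ℂ} (hf : DifferentiableOn ℂ f (ball 0 1))
    {z : ℂ} (hz : z ∈ ball (0:ℂ) 1) (hfz : f z ≠ 0) :
    DifferentiableAt ℂ (fun w => deriv f w / f w) z := by
  have hfa : AnalyticOnNhd ℂ f (ball 0 1) := hf.analyticOnNhd isOpen_ball
  have hda : AnalyticAt ℂ (deriv f) z := hfa.deriv z hz
  exact hda.differentiableAt.div ((hfa z hz).differentiableAt) hfz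

/-- Cauchy: if `f` has no zeros on the closed ball, the log-derivative integral vanishes. -/
lemma logDeriv_integral_zero {f : ℂ → ℂ} (hf : DifferentiableOn ℂ f (ball 0 1))
    {s : ℝ} (h0 : 0 < s) (h1 : s < 1)
    (hnz : ∀ z ∈ closedBall (0:ℂ) s, f z ≠ 0) :
    (∮ z in C(0, s), deriv f z / f z) = 0 := by
  have hsub : closedBall (0:ℂ) s ⊆ ball 0 1 := closedBall_subset_ball h1
  refine circleIntegral_eq_zero_of_differentiable_on_off_countable h0.le
    (Set.countable_empty) ?_ ?_
  · intro z hz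
    exact (logDeriv_differentiableAt hf (hsub hz) (hnz z hz)).continuousAt.continuousWithinAt
  · intro z hz
    have hz' : z ∈ closedBall (0:ℂ) s := ball_subset_closedBall hz.1
    exact logDeriv_differentiableAt hf (hsub hz') (hnz z hz')

lemma logDeriv_integral_eq_two_pi_I {f : ℂ → ℂ} (hf : DifferentiableOn ℂ f (ball 0 1))
    {s : ℝ} (h0 : 0 < s) (h1 : s < 1)
    (hre : ∀ z ∈ sphere (0:ℂ) s, 0 < (f z * (starRingEnd ℂ) z).re) :
    (∮ z in C(0, s), deriv f z / f z) = 2 * Real.pi * I := by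
  classical
  set V : Set ℂ := (ball (0:ℂ) 1 ∩ {(0:ℂ)}ᶜ) ∩
      (fun z => (f z * (starRingEnd ℂ) z).re) ⁻¹' (Set.Ioi 0) with hVdef
  have hU0 : IsOpen (ball (0:ℂ) 1 ∩ {(0:ℂ)}ᶜ) := isOpen_ball.inter isOpen_compl_singleton
  have hcont : ContinuousOn (fun z => (f z * (starRingEnd ℂ) z).re)
      (ball (0:ℂ) 1 ∩ {(0:ℂ)}ᶜ) :=
    Complex.continuous_re.comp_continuousOn
      ((hf.continuousOn.mono inter_subset_left).mul Complex.continuous_conj.continuousOn)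
  have hVopen : IsOpen V := hcont.isOpen_inter_preimage hU0 isOpen_Ioi
  have hsphV : sphere (0:ℂ) s ⊆ V := by
    intro z hz
    have hzn : ‖z‖ = s := by simpa using hz
    refine ⟨⟨?_, ?_⟩, ?_⟩
    · simp only [mem_ball, dist_zero_right]; rw [hzn]; exact h1
    · simp only [Set.mem_compl_iff, Set.mem_singleton_iff]
      intro h; rw [h] at hzn; simp at hzn; exact h0.ne' hzn.symm
    · simpa only [Set.mem_preimage, Set.mem_Ioi] using hre z hz
  -- basic facts on V
  have hVball : V ⊆ ball (0:ℂ) 1 := fun z hz => hz.1.1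
  have hVne : ∀ z ∈ V, z ≠ 0 := fun z hz => hz.1.2
  have hVpos : ∀ z ∈ V, 0 < (f z * (starRingEnd ℂ) z).re := fun z hz => hz.2
  have hVfne : ∀ z ∈ V, f z ≠ 0 := by
    intro z hz h
    have := hVpos z hz
    rw [h, zero_mul] at this
    simp at this
  have hVdiv : ∀ z ∈ V, 0 < (f z / z).re := by
    intro z hz
    have hz0 : z ≠ 0 := hVne z hz
    have h2 : f z / z = (f z * (starRingEnd ℂ) z) / ((Complex.normSq z : ℝ) : ℂ) := by
      rw [← Complex.mul_conj]
      rw [mul_div_mul_right _ _ (by simpa using hz0 : (starRingEnd ℂ) z ≠ 0)]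
    rw [h2, Complex.div_ofReal_re]
    exact div_pos (hVpos z hz) (Complex.normSq_pos.2 hz0)
  have hVslit : ∀ z ∈ V, f z / z ∈ Complex.slitPlane := fun z hz =>
    Complex.mem_slitPlane_iff.2 (Or.inl (hVdiv z hz))
  set L : ℂ → ℂ := fun z => Complex.log (f z / z) with hLdef
  have hfd : ∀ z ∈ V, DifferentiableAt ℂ f z := fun z hz =>
    hf.differentiableAt (isOpen_ball.mem_nhds (hVball hz))
  have hLdiff : ∀ z ∈ V, DifferentiableAt ℂ L z := by
    intro z hz
    exact ((hfd z hz).div differentiableAt_id (hVne z hz)).clog (hVslit z hz)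
  have hexpL : ∀ z ∈ V, Complex.exp (L z) = f z / z := fun z hz =>
    Complex.exp_log (div_ne_zero (hVfne z hz) (hVne z hz))
  have hfeq : ∀ z ∈ V, f z = z * Complex.exp (L z) := by
    intro z hz
    rw [hexpL z hz, mul_div_cancel₀ _ (hVne z hz)]
  -- derivative identity on V
  have hkey : ∀ z ∈ V, deriv f z / f z = z⁻¹ + deriv L z := by
    intro z hz
    have hL' : HasDerivAt L (deriv L z) z := (hLdiff z hz).hasDerivAt
    have hR : HasDerivAt (fun w => w * Complex.exp (L w))
        (1 * Complex.exp (L z) + z * (Complex.exp (L z) * deriv L z)) z :=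
      (hasDerivAt_id z).mul hL'.cexp
    have hev : f =ᶠ[nhds z] fun w => w * Complex.exp (L w) := by
      filter_upwards [hVopen.mem_nhds hz] with w hw
      exact hfeq w hw
    have hfd' : HasDerivAt f (1 * Complex.exp (L z) + z * (Complex.exp (L z) * deriv L z)) z :=
      hR.congr_of_eventuallyEq hev
    have hdf : deriv f z = 1 * Complex.exp (L z) + z * (Complex.exp (L z) * deriv L z) :=
      hfd'.deriv
    rw [hdf, hfeq z hz]
    have he : Complex.exp (L z) ≠ 0 := Complex.exp_ne_zero _
    field_simp [hVne z hz]
  -- integral computation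
  have hsub : sphere (0:ℂ) s ⊆ V := hsphV
  have hcongr : (∮ z in C(0, s), deriv f z / f z) = ∮ z in C(0, s), (z⁻¹ + deriv L z) :=
    circleIntegral.integral_congr h0.le (fun z hz => hkey z (hsub hz))
  have hLder_cont : ContinuousOn (deriv L) V := by
    have : DifferentiableOn ℂ L V := fun z hz => (hLdiff z hz).differentiableWithinAt
    exact ((this.analyticOnNhd hVopen).deriv.differentiableOn).continuousOn
  have hint1 : CircleIntegrable (fun z : ℂ => z⁻¹) 0 s :=
    ContinuousOn.circleIntegrable h0.le (fun z hz =>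
      (continuousAt_inv₀ (hVne z (hsub hz))).continuousWithinAt)
  have hintL : (∮ z in C(0, s), deriv L z) = 0 := by
    refine circleIntegral.integral_eq_zero_of_hasDerivWithinAt (f := L) h0.le (fun z hz => ?_)
    exact ((hLdiff z (hsub hz)).hasDerivAt).hasDerivWithinAt
  have hintadd : (∮ z in C(0, s), (z⁻¹ + deriv L z)) = (∮ z in C(0, s), (z:ℂ)⁻¹) := by
    have h2 : (∀ z ∈ sphere (0:ℂ) s, (z:ℂ)⁻¹ = (z⁻¹ + deriv L z) - deriv L z) := by
      intro z _; ring
    have hintL' : CircleIntegrable (deriv L) 0 s :=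
      ContinuousOn.circleIntegrable h0.le ((hLder_cont.mono hsub))
    have hintsum : CircleIntegrable (fun z : ℂ => z⁻¹ + deriv L z) 0 s := hint1.add hintL'
    calc (∮ z in C(0, s), (z⁻¹ + deriv L z))
        = (∮ z in C(0, s), (z⁻¹ + deriv L z)) - (∮ z in C(0, s), deriv L z) := by
          rw [hintL, sub_zero]
      _ = (∮ z in C(0, s), ((z⁻¹ + deriv L z) - deriv L z)) :=
          (circleIntegral.integral_sub hintsum hintL').symm
      _ = (∮ z in C(0, s), (z:ℂ)⁻¹) := circleIntegral.integral_congr h0.le (by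
          intro z _; simp)
  have hinv : (∮ z in C(0, s), (z:ℂ)⁻¹) = 2 * Real.pi * I := by
    have := circleIntegral.integral_sub_center_inv (0:ℂ) (R := s) h0.ne'
    simpa using this
  rw [hcongr, hintadd, hinv]

/-- The zero set of a non-trivial holomorphic function in a compact subdisc is finite. -/
lemma zeros_finite {f : ℂ → ℂ} (hf : DifferentiableOn ℂ f (ball 0 1))
    {s : ℝ} (h1 : s < 1) {z1 : ℂ} (hz1 : z1 ∈ ball (0:ℂ) 1) (hfz1 : f z1 ≠ 0) :
    {z ∈ closedBall (0:ℂ) s | f z = 0}.Finite := by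
  by_contra hinf
  obtain ⟨x, hxK, hx⟩ := (Set.Infinite.exists_accPt_of_subset_isCompact
    ((Set.not_infinite.not_right.mp (fun h => hinf h)) : {z | z ∈ closedBall (0:ℂ) s ∧ f z = 0}.Infinite)
    (isCompact_closedBall (0:ℂ) s) (fun z hz => hz.1))
  have hxball : x ∈ ball (0:ℂ) 1 := by
    have := hxK
    simp only [mem_closedBall, dist_zero_right] at this
    have hs0 : 0 ≤ s := by
      rcases Set.Infinite.nonempty hinf with ⟨w, hw⟩
      have := hw.1; simp only [mem_closedBall, dist_zero_right] at this
      exact le_trans (norm_nonneg w) this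
    exact by simp only [mem_ball, dist_zero_right]; linarith
  have hfreq : ∃ᶠ z in nhdsWithin x {x}ᶜ, f z = 0 := by
    rw [accPt_iff_frequently] at hx
    rw [frequently_nhdsWithin_iff]
    exact hx.mono (fun y hy => ⟨(hy.2 : y ∈ closedBall (0:ℂ) s ∧ f y = 0).2, hy.1⟩)
  have hana : AnalyticOnNhd ℂ f (ball 0 1) := hf.analyticOnNhd isOpen_ball
  have := hana.eqOn_zero_of_preconnected_of_frequently_eq_zero
    (convex_ball (0:ℂ) 1).isPreconnected hxball hfreq hz1
  exact hfz1 this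

/-- Global factorization of a holomorphic function at a zero. -/
lemma factor_at_zero {f : ℂ → ℂ} (hf : DifferentiableOn ℂ f (ball 0 1))
    {z0 z1 : ℂ} (hz0 : z0 ∈ ball (0:ℂ) 1) (hfz0 : f z0 = 0)
    (hz1 : z1 ∈ ball (0:ℂ) 1) (hfz1 : f z1 ≠ 0) :
    ∃ (n : ℕ) (g : ℂ → ℂ), 0 < n ∧ DifferentiableOn ℂ g (ball 0 1) ∧ g z0 ≠ 0 ∧
      ∀ z, f z = (z - z0) ^ n * g z := by
  classical
  have hana : AnalyticOnNhd ℂ f (ball 0 1) := hf.analyticOnNhd isOpen_ball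
  have hA : AnalyticAt ℂ f z0 := hana z0 hz0
  have hntop : analyticOrderAt f z0 ≠ ⊤ := by
    intro htop
    rw [analyticOrderAt_eq_top] at htop
    have heq : Set.EqOn f 0 (ball (0:ℂ) 1) :=
      hana.eqOn_zero_of_preconnected_of_eventuallyEq_zero
        (convex_ball (0:ℂ) 1).isPreconnected hz0 htop
    exact hfz1 (heq hz1)
  obtain ⟨n, hn⟩ : ∃ n : ℕ, analyticOrderAt f z0 = n := by
    lift analyticOrderAt f z0 to ℕ using hntop with m hm
    exact ⟨m, rfl⟩
  obtain ⟨gl, hgl_an, hgl_ne, hgl_ev⟩ := hA.analyticOrderAt_eq_natCast.1 hn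
  have hn0 : 0 < n := by
    rcases Nat.eq_zero_or_pos n with h | h
    · exfalso
      subst h
      have := hgl_ev.self_of_nhds
      simp only [pow_zero, one_smul] at this
      rw [hfz0] at this
      exact hgl_ne this.symm
    · exact h
  set g : ℂ → ℂ := fun z => if z = z0 then gl z0 else f z / (z - z0) ^ n with hgdef
  have hgev : g =ᶠ[nhds z0] gl := by
    filter_upwards [hgl_ev] with w hw
    by_cases hww : w = z0
    · subst hww; simp [hgdef]
    · have hwz : (w - z0) ^ n ≠ 0 := pow_ne_zero _ (sub_ne_zero.2 hww)
      simp only [hgdef, if_neg hww]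
      rw [hw, smul_eq_mul]
      field_simp
  have hgdiff : DifferentiableOn ℂ g (ball 0 1) := by
    intro z hz
    by_cases hzz : z = z0
    · subst hzz
      have : DifferentiableAt ℂ g z := by
        rw [Filter.EventuallyEq.differentiableAt_iff hgev]
        exact hgl_an.differentiableAt
      exact this.differentiableWithinAt
    · have hopen : IsOpen (ball (0:ℂ) 1 ∩ {z0}ᶜ) := isOpen_ball.inter isOpen_compl_singleton
      have hmem : z ∈ ball (0:ℂ) 1 ∩ {z0}ᶜ := ⟨hz, hzz⟩
      have hd : DifferentiableAt ℂ (fun w => f w / (w - z0) ^ n) z := by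
        refine DifferentiableAt.div ?_ ?_ (pow_ne_zero _ (sub_ne_zero.2 hzz))
        · exact hf.differentiableAt (isOpen_ball.mem_nhds hz)
        · exact ((differentiableAt_id.sub_const z0).pow n)
      have hev2 : g =ᶠ[nhds z] fun w => f w / (w - z0) ^ n := by
        filter_upwards [isOpen_compl_singleton.mem_nhds (by exact hzz : z ∈ ({z0}ᶜ : Set ℂ))]
          with w hw
        simp only [Set.mem_compl_iff, Set.mem_singleton_iff] at hw
        simp only [hgdef, if_neg hw]
      have : DifferentiableAt ℂ g z := by
        rw [Filter.EventuallyEq.differentiableAt_iff hev2]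
        exact hd
      exact this.differentiableWithinAt
  refine ⟨n, g, hn0, hgdiff, by simp [hgdef, hgl_ne], ?_⟩
  intro z
  by_cases hzz : z = z0
  · subst hzz
    rw [hfz0, sub_self, zero_pow hn0.ne', zero_mul]
  · simp only [hgdef, if_neg hzz]
    rw [mul_div_cancel₀ _ (pow_ne_zero _ (sub_ne_zero.2 hzz))]

lemma deriv_factor {g : ℂ → ℂ} (hg : DifferentiableOn ℂ g (ball 0 1))
    {z0 z : ℂ} {n : ℕ} (hz : z ∈ ball (0:ℂ) 1) :
    deriv (fun w => (w - z0) ^ n * g w) z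
      = n * (z - z0) ^ (n - 1) * g z + (z - z0) ^ n * deriv g z := by
  have hgd : HasDerivAt g (deriv g z) z :=
    (hg.differentiableAt (isOpen_ball.mem_nhds hz)).hasDerivAt
  have hp : HasDerivAt (fun w : ℂ => (w - z0) ^ n) ((n : ℂ) * (z - z0) ^ (n - 1) * 1) z :=
    ((hasDerivAt_id z).sub_const z0).pow n
  have := (hp.mul hgd).deriv
  rw [show (fun w => (w - z0) ^ n * g w) = (fun w => (w - z0) ^ n) * g from rfl, this]; ring

lemma sphere_sub_ne {z z0 : ℂ} {s : ℝ} (hz : z ∈ sphere (0:ℂ) s)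
    (hz0 : z0 ∈ ball (0:ℂ) s) : z - z0 ≠ 0 := by
  have h1' : ‖z‖ = s := by simpa using hz
  have h2' : ‖z0‖ < s := by simpa [mem_ball, dist_zero_right] using hz0
  intro h
  rw [sub_eq_zero] at h
  rw [h] at h1'
  exact absurd h1' h2'.ne

lemma sphere_mem_ball {z : ℂ} {s : ℝ} (h1 : s < 1) (hz : z ∈ sphere (0:ℂ) s) :
    z ∈ ball (0:ℂ) 1 := by
  have : ‖z‖ = s := by simpa using hz
  simp only [mem_ball, dist_zero_right]
  rw [this]; exact h1

lemma logDeriv_circleIntegrable {g : ℂ → ℂ} (hg : DifferentiableOn ℂ g (ball 0 1))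
    {s : ℝ} (h0 : 0 < s) (h1 : s < 1)
    (hgnz : ∀ z ∈ sphere (0:ℂ) s, g z ≠ 0) :
    CircleIntegrable (fun z => deriv g z / g z) 0 s := by
  refine ContinuousOn.circleIntegrable h0.le (fun z hz => ?_)
  have hga : AnalyticOnNhd ℂ g (ball 0 1) := hg.analyticOnNhd isOpen_ball
  have hzb := sphere_mem_ball h1 hz
  exact (((hga.deriv z hzb).differentiableAt.div (hga z hzb).differentiableAt
    (hgnz z hz)).continuousAt).continuousWithinAt

/-- Splitting off one factor from the log-derivative integral. -/
lemma logDeriv_integral_split {f g : ℂ → ℂ}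
    (hg : DifferentiableOn ℂ g (ball 0 1)) {z0 : ℂ} {n : ℕ} {s : ℝ}
    (h0 : 0 < s) (h1 : s < 1) (hz0 : z0 ∈ ball (0:ℂ) s)
    (hfac : ∀ z, f z = (z - z0) ^ n * g z)
    (hgnz : ∀ z ∈ sphere (0:ℂ) s, g z ≠ 0) :
    (∮ z in C(0, s), deriv f z / f z)
      = n * (2 * Real.pi * I) + ∮ z in C(0, s), deriv g z / g z := by
  have hfe : f = fun w => (w - z0) ^ n * g w := funext hfac
  have hkey : ∀ z ∈ sphere (0:ℂ) s, deriv f z / f z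
      = (n : ℂ) * (z - z0)⁻¹ + deriv g z / g z := by
    intro z hz
    have hsubne : z - z0 ≠ 0 := sphere_sub_ne hz hz0
    have hzball : z ∈ ball (0:ℂ) 1 := sphere_mem_ball h1 hz
    have hd := deriv_factor hg (z0 := z0) (n := n) hzball
    rw [hfe]
    simp only
    rw [hd]
    have hgz : g z ≠ 0 := hgnz z hz
    rcases Nat.eq_zero_or_pos n with hn | hn
    · subst hn; simp
    · have hpow : (z - z0) ^ n = (z - z0) ^ (n - 1) * (z - z0) := by
        conv_lhs => rw [← Nat.succ_pred_eq_of_pos hn, pow_succ, Nat.pred_eq_sub_one]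
      rw [hpow]
      field_simp
  have hint1 : CircleIntegrable (fun z : ℂ => (n : ℂ) * (z - z0)⁻¹) 0 s := by
    refine ContinuousOn.circleIntegrable h0.le
      (ContinuousOn.mul continuousOn_const (fun z hz => ?_))
    exact (ContinuousAt.continuousWithinAt (ContinuousAt.inv₀ (by fun_prop)
      (sphere_sub_ne hz hz0)))
  have hint2 : CircleIntegrable (fun z => deriv g z / g z) 0 s :=
    logDeriv_circleIntegrable hg h0 h1 hgnz
  calc (∮ z in C(0, s), deriv f z / f z)
      = ∮ z in C(0, s), ((n : ℂ) * (z - z0)⁻¹ + deriv g z / g z) :=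
        circleIntegral.integral_congr h0.le (fun z hz => hkey z hz)
    _ = (∮ z in C(0, s), (n : ℂ) * (z - z0)⁻¹) + ∮ z in C(0, s), deriv g z / g z := by
        have hintsum : CircleIntegrable
            (fun z => (n : ℂ) * (z - z0)⁻¹ + deriv g z / g z) 0 s := hint1.add hint2
        have hs := circleIntegral.integral_sub
          (f := fun z => (n : ℂ) * (z - z0)⁻¹ + deriv g z / g z)
          (g := fun z => deriv g z / g z) hintsum hint2
        have hcongr2 : (∮ z in C(0, s),
            (((n : ℂ) * (z - z0)⁻¹ + deriv g z / g z) - deriv g z / g z))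
            = ∮ z in C(0, s), (n : ℂ) * (z - z0)⁻¹ :=
          circleIntegral.integral_congr h0.le (fun z _ => by ring)
        beta_reduce at hs
        rw [hcongr2] at hs
        rw [hs]
        ring
    _ = n * (2 * Real.pi * I) + ∮ z in C(0, s), deriv g z / g z := by
        rw [circleIntegral.integral_const_mul,
          circleIntegral.integral_sub_inv_of_mem_ball hz0]

lemma sphere_mem_ball' {z : ℂ} {s : ℝ} (h1 : s < 1) (hz : z ∈ sphere (0:ℂ) s) :
    z ∈ ball (0:ℂ) 1 := by
  have : ‖z‖ = s := by simpa using hz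
  simp only [mem_ball, dist_zero_right]
  rw [this]; exact h1

lemma self_mem_sphere {s : ℝ} (h0 : 0 < s) : (s : ℂ) ∈ sphere (0:ℂ) s := by
  simp [abs_of_pos h0]

lemma closedBall_zero_mem_ball {z0 : ℂ} {s : ℝ} (hz0 : z0 ∈ closedBall (0:ℂ) s)
    (hsph : z0 ∉ sphere (0:ℂ) s) : z0 ∈ ball (0:ℂ) s := by
  simp only [mem_closedBall, dist_zero_right] at hz0
  simp only [mem_sphere, dist_zero_right] at hsph
  simp only [mem_ball, dist_zero_right]
  exact lt_of_le_of_ne hz0 hsph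

lemma master_count : ∀ (p : ℕ) (f : ℂ → ℂ), DifferentiableOn ℂ f (ball 0 1) →
    ∀ {s : ℝ}, 0 < s → s < 1 → (∀ z ∈ sphere (0:ℂ) s, f z ≠ 0) →
    {z ∈ closedBall (0:ℂ) s | f z = 0}.ncard = p →
    ∃ N : ℕ, p ≤ N ∧ (p = 0 → N = 0) ∧
      (∮ z in C(0, s), deriv f z / f z) = N * (2 * Real.pi * I) := by
  intro p
  induction p with
  | zero =>
    intro f hf s hs0 hs1 hnz hcard
    have hwit : ((s : ℂ)) ∈ sphere (0:ℂ) s := self_mem_sphere hs0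
    have hfin := zeros_finite hf hs1 (sphere_mem_ball' hs1 hwit) (hnz _ hwit)
    have hempty : {z ∈ closedBall (0:ℂ) s | f z = 0} = ∅ := by
      rwa [Set.ncard_eq_zero hfin] at hcard
    refine ⟨0, le_rfl, fun _ => rfl, ?_⟩
    rw [Nat.cast_zero, zero_mul]
    refine logDeriv_integral_zero hf hs0 hs1 (fun z hz hfz => ?_)
    have : z ∈ {z ∈ closedBall (0:ℂ) s | f z = 0} := ⟨hz, hfz⟩
    rw [hempty] at this
    exact this
  | succ p ih =>
    intro f hf s hs0 hs1 hnz hcard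
    have hwit : ((s : ℂ)) ∈ sphere (0:ℂ) s := self_mem_sphere hs0
    have hwb : ((s : ℂ)) ∈ ball (0:ℂ) 1 := sphere_mem_ball' hs1 hwit
    have hwnz : f (s : ℂ) ≠ 0 := hnz _ hwit
    have hfin := zeros_finite hf hs1 hwb hwnz
    have hne : {z ∈ closedBall (0:ℂ) s | f z = 0}.Nonempty := by
      apply Set.nonempty_of_ncard_ne_zero
      rw [hcard]; exact Nat.succ_ne_zero p
    obtain ⟨z0, hz0cb, hz0f⟩ := hne
    have hz0sph : z0 ∉ sphere (0:ℂ) s := fun h => hnz z0 h hz0f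
    have hz0balls : z0 ∈ ball (0:ℂ) s := closedBall_zero_mem_ball hz0cb hz0sph
    have hz0ball : z0 ∈ ball (0:ℂ) 1 := ball_subset_ball hs1.le hz0balls
    obtain ⟨n, g, hn, hgdiff, hgz0, hfac⟩ := factor_at_zero hf hz0ball hz0f hwb hwnz
    have hgnz : ∀ z ∈ sphere (0:ℂ) s, g z ≠ 0 := by
      intro z hz hg0
      apply hnz z hz
      rw [hfac z, hg0, mul_zero]
    have hZg : {z ∈ closedBall (0:ℂ) s | g z = 0}
        = {z ∈ closedBall (0:ℂ) s | f z = 0} \ {z0} := by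
      ext z
      simp only [Set.mem_setOf_eq, Set.mem_diff, Set.mem_singleton_iff]
      constructor
      · rintro ⟨hzc, hzg⟩
        refine ⟨⟨hzc, by rw [hfac z, hzg, mul_zero]⟩, ?_⟩
        rintro rfl
        exact hgz0 hzg
      · rintro ⟨⟨hzc, hzf⟩, hzne⟩
        refine ⟨hzc, ?_⟩
        have hth := hfac z
        rw [hzf] at hth
        have hpow : (z - z0) ^ n ≠ 0 := pow_ne_zero _ (sub_ne_zero.2 hzne)
        rcases mul_eq_zero.mp hth.symm with h | h
        · exact absurd h hpow
        · exact h
    have hcardg : {z ∈ closedBall (0:ℂ) s | g z = 0}.ncard = p := by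
      rw [hZg, Set.ncard_diff_singleton_of_mem (show z0 ∈ {z | z ∈ closedBall (0:ℂ) s ∧ f z = 0} from ⟨hz0cb, hz0f⟩), hcard]
      rfl
    obtain ⟨N', hpN', hN0, hint⟩ := ih g hgdiff hs0 hs1 hgnz hcardg
    refine ⟨n + N', ?_, ?_, ?_⟩
    · omega
    · intro h; exact absurd h (Nat.succ_ne_zero p)
    · rw [logDeriv_integral_split hgdiff hs0 hs1 hz0balls hfac hgnz, hint]
      push_cast
      ring

lemma exists_unique_zero_of_re_pos {f : ℂ → ℂ} (hf : DifferentiableOn ℂ f (ball 0 1))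
    {s : ℝ} (h0 : 0 < s) (h1 : s < 1)
    (hre : ∀ z ∈ sphere (0:ℂ) s, 0 < (f z * (starRingEnd ℂ) z).re) :
    ∃ z0 ∈ ball (0:ℂ) s, f z0 = 0 ∧ ∀ z ∈ closedBall (0:ℂ) s, f z = 0 → z = z0 := by
  have hnz : ∀ z ∈ sphere (0:ℂ) s, f z ≠ 0 := by
    intro z hz hf0
    have := hre z hz
    rw [hf0, zero_mul] at this
    simp at this
  obtain ⟨N, hpN, hN0, hint⟩ := master_count {z ∈ closedBall (0:ℂ) s | f z = 0}.ncard
    f hf h0 h1 hnz rfl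
  rw [logDeriv_integral_eq_two_pi_I hf h0 h1 hre] at hint
  have h2pi : (2 * Real.pi * I : ℂ) ≠ 0 := by
    simp [Real.pi_ne_zero, Complex.I_ne_zero]
  have hN1 : N = 1 := by
    have : (N : ℂ) * (2 * Real.pi * I) = 1 * (2 * Real.pi * I) := by
      rw [← hint]; ring
    have := mul_right_cancel₀ h2pi this
    exact_mod_cast this
  subst hN1
  have hp1 : {z ∈ closedBall (0:ℂ) s | f z = 0}.ncard = 1 := by
    rcases Nat.lt_or_ge {z ∈ closedBall (0:ℂ) s | f z = 0}.ncard 1 with h | h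
    · exact absurd (hN0 (Nat.lt_one_iff.mp h)) one_ne_zero
    · exact le_antisymm hpN h
  obtain ⟨a, ha⟩ := Set.ncard_eq_one.mp hp1
  have hamem : a ∈ {z ∈ closedBall (0:ℂ) s | f z = 0} := by rw [ha]; exact rfl
  have haf : f a = 0 := hamem.2
  have hacb : a ∈ closedBall (0:ℂ) s := hamem.1
  have hasph : a ∉ sphere (0:ℂ) s := fun h => hnz a h haf
  refine ⟨a, closedBall_zero_mem_ball hacb hasph, haf, ?_⟩
  intro z hz hzf
  have : z ∈ {z ∈ closedBall (0:ℂ) s | f z = 0} := ⟨hz, hzf⟩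
  rw [ha] at this
  exact this

lemma part_a {g : ℂ → ℂ} (hg : DifferentiableOn ℂ g (ball 0 1))
    (ε b : ℝ) (hε : 0 < ε)
    (hineq : ∀ ζ : ℂ, 1 - ε < ‖ζ‖ → ‖ζ‖ < 1 →
      (g ζ * (starRingEnd ℂ) ζ).re ≤ b * (1 - ‖ζ‖ ^ 2)) :
    ∀ w ∈ ball (0:ℂ) 1, ∀ r : ℝ, 0 < r →
      ∃! ζ, ζ ∈ ball (0:ℂ) 1 ∧ ζ - w - (r : ℂ) * g ζ = 0 := by
  intro w hw r hr
  set W : ℝ := ‖w‖ with hW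
  have hW1 : W < 1 := by simpa [mem_ball, dist_zero_right] using hw
  have hW0 : 0 ≤ W := norm_nonneg w
  set B : ℝ := max b 0 with hB
  have hB0 : 0 ≤ B := le_max_right b 0
  -- choose the radius s
  set m : ℝ := max (max (1 - ε) W) (1/2) with hm
  have hm1 : m < 1 := by
    apply max_lt (max_lt (by linarith) hW1) (by norm_num)
  set δ : ℝ := min ((1 - m)/2) ((1 - W)/(4*(1 + r*B))) with hδ
  have hrB : 0 < 1 + r*B := by positivity
  have hδ0 : 0 < δ := by
    apply lt_min (by linarith) (div_pos (by linarith) (by positivity))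
  set s : ℝ := 1 - δ with hs
  have hs1 : s < 1 := by simp only [hs]; linarith
  have hsm : m < s := by
    have h1 : δ ≤ (1 - m)/2 := min_le_left _ _
    simp only [hs]; linarith
  have hs0 : 0 < s := by
    have : (1:ℝ)/2 ≤ m := le_max_right _ _
    linarith
  have hshalf : 1/2 < s := lt_of_le_of_lt (le_max_right _ _) hsm
  have hsW : W < s := lt_of_le_of_lt (le_trans (le_max_right _ _) (le_max_left _ _)) hsm
  have hsε : 1 - ε < s := lt_of_le_of_lt (le_trans (le_max_left _ _) (le_max_left _ _)) hsm
  have hφs : 0 < (1 + r*B)*s^2 - W*s - r*B := by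
    have h2 : δ ≤ (1 - W)/(4*(1 + r*B)) := min_le_right _ _
    have hh : δ * (4*(1 + r*B)) ≤ 1 - W := (le_div_iff₀ (by positivity)).mp h2
    rw [hs]
    nlinarith [sq_nonneg δ, mul_nonneg hW0 hδ0.le, mul_pos hrB hδ0,
      mul_nonneg (mul_nonneg hrB.le hδ0.le) hδ0.le]
  -- the key positivity on the outer annulus
  have hkey : ∀ z : ℂ, s ≤ ‖z‖ → ‖z‖ < 1 →
      0 < ((z - w - (r:ℂ) * g z) * (starRingEnd ℂ) z).re := by
    intro z hzs hz1
    set t : ℝ := ‖z‖ with ht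
    have htε : 1 - ε < t := lt_of_lt_of_le hsε hzs
    have hgb : (g z * (starRingEnd ℂ) z).re ≤ B * (1 - t^2) := by
      refine le_trans (hineq z htε hz1) ?_
      have h1 : (0:ℝ) ≤ 1 - t^2 := by nlinarith [norm_nonneg z]
      exact mul_le_mul_of_nonneg_right (le_max_left b 0) h1
    have hzz : (z * (starRingEnd ℂ) z).re = t^2 := by
      rw [Complex.mul_conj, Complex.ofReal_re, Complex.normSq_eq_norm_sq]
    have hwz : (w * (starRingEnd ℂ) z).re ≤ W * t := by
      refine le_trans (Complex.re_le_norm _) ?_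
      rw [norm_mul]
      simp [hW, ht]
    have hexp : ((z - w - (r:ℂ) * g z) * (starRingEnd ℂ) z).re
        = (z * (starRingEnd ℂ) z).re - (w * (starRingEnd ℂ) z).re
          - r * (g z * (starRingEnd ℂ) z).re := by
      simp [sub_mul, mul_assoc, Complex.sub_re, Complex.re_ofReal_mul]
    rw [hexp, hzz]
    have hmono : (1 + r*B)*s^2 - W*s - r*B ≤ (1 + r*B)*t^2 - W*t - r*B := by
      nlinarith [hzs, hshalf, hsW, hW1, mul_nonneg (mul_nonneg hr.le hB0) (sub_nonneg.2 hzs)]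
    nlinarith [mul_le_mul_of_nonneg_left hgb hr.le]
  -- the holomorphic function
  set f : ℂ → ℂ := fun ζ => ζ - w - (r:ℂ) * g ζ with hf
  have hfdiff : DifferentiableOn ℂ f (ball 0 1) := by
    apply DifferentiableOn.sub
    · exact (differentiableOn_id.sub_const w)
    · exact (differentiableOn_const _).mul hg
  have hre : ∀ z ∈ sphere (0:ℂ) s, 0 < (f z * (starRingEnd ℂ) z).re := by
    intro z hz
    have hzn : ‖z‖ = s := by simpa using hz
    exact hkey z (le_of_eq hzn.symm) (by rw [hzn]; exact hs1)
  obtain ⟨z0, hz0b, hz0f, huniq⟩ := exists_unique_zero_of_re_pos hfdiff hs0 hs1 hre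
  refine ⟨z0, ⟨ball_subset_ball hs1.le hz0b, hz0f⟩, ?_⟩
  rintro z ⟨hz1, hzf⟩
  have hz1' : ‖z‖ < 1 := by simpa [mem_ball, dist_zero_right] using hz1
  have hzs : ‖z‖ < s := by
    by_contra hcon
    push_neg at hcon
    have hpos := hkey z hcon hz1'
    rw [hzf, zero_mul] at hpos
    simp at hpos
  exact huniq z (mem_closedBall.2 (by simpa [dist_zero_right] using hzs.le)) hzf

lemma part_b {g : ℂ → ℂ} (hg : DifferentiableOn ℂ g (ball 0 1))
    (ε b : ℝ) (hε : 0 < ε)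
    (hineq : ∀ ζ : ℂ, 1 - ε < ‖ζ‖ → ‖ζ‖ < 1 →
      (g ζ * (starRingEnd ℂ) ζ).re ≤ b * (1 - ‖ζ‖ ^ 2)) :
    ∃ q : ℂ → ℂ, DifferentiableOn ℂ q (ball 0 1) ∧
      (∀ ζ ∈ ball (0:ℂ) 1, 0 ≤ (q ζ).re) ∧
      ∀ ζ ∈ ball (0:ℂ) 1, g ζ = g 0 - (starRingEnd ℂ) (g 0) * ζ ^ 2 - ζ * q ζ := by
  set H : ℂ → ℂ := fun ζ => g 0 - (starRingEnd ℂ) (g 0) * ζ ^ 2 - g ζ with hHdef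
  have h0ball : (0:ℂ) ∈ ball (0:ℂ) 1 := mem_ball_self one_pos
  have hH0 : H 0 = 0 := by simp [hHdef]
  have hHdiff : DifferentiableOn ℂ H (ball 0 1) := by
    apply DifferentiableOn.sub
    · exact (differentiableOn_const _).sub
        ((differentiableOn_const _).mul (differentiableOn_id.pow 2))
    · exact hg
  set q : ℂ → ℂ := dslope H 0 with hqdef
  have hnhds : ball (0:ℂ) 1 ∈ nhds (0:ℂ) := isOpen_ball.mem_nhds h0ball
  have hqdiff : DifferentiableOn ℂ q (ball 0 1) :=
    (differentiableOn_dslope hnhds).2 hHdiff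
  have hqmul : ∀ ζ : ℂ, ζ * q ζ = H ζ := by
    intro ζ
    by_cases hζ : ζ = 0
    · subst hζ; rw [hH0]; ring
    · rw [hqdef, dslope_of_ne _ hζ]
      simp only [slope_def_field, sub_zero, hH0]
      field_simp
  have hiden : ∀ ζ ∈ ball (0:ℂ) 1, g ζ = g 0 - (starRingEnd ℂ) (g 0) * ζ ^ 2 - ζ * q ζ := by
    intro ζ _
    rw [hqmul ζ]
    simp [hHdef]
  refine ⟨q, hqdiff, ?_, hiden⟩
  -- nonnegativity of Re q
  set C : ℝ := 4 * (‖g 0‖ + |b|) with hC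
  have hC0 : 0 ≤ C := by positivity
  -- boundary lower bound for Re q
  have hbound : ∀ z : ℂ, 1/2 ≤ ‖z‖ → 1 - ε < ‖z‖ → ‖z‖ < 1 →
      -(q z).re ≤ C * (1 - ‖z‖^2) := by
    intro z hhalf hεz h1z
    have hz0 : z ≠ 0 := by
      intro h; rw [h] at hhalf; simp at hhalf; linarith
    set t : ℝ := ‖z‖ with ht
    have hnq : Complex.normSq z = t^2 := by
      rw [Complex.normSq_eq_norm_sq]
    have hqre : (q z).re = (H z * (starRingEnd ℂ) z).re / t^2 := by
      have h1 : q z = H z / z := by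
        have := hqmul z
        field_simp at this ⊢
        linear_combination this
      rw [h1]
      have h2 : H z / z = (H z * (starRingEnd ℂ) z) / ((Complex.normSq z : ℝ) : ℂ) := by
        rw [← Complex.mul_conj]
        rw [mul_div_mul_right _ _ (by simpa using hz0 : (starRingEnd ℂ) z ≠ 0)]
      rw [h2, Complex.div_ofReal_re, hnq]
    -- expand H z * conj z
    have hHexp : (H z * (starRingEnd ℂ) z).re
        = (g 0 * (starRingEnd ℂ) z).re * (1 - t^2) - (g z * (starRingEnd ℂ) z).re := by
      have e1 : H z * (starRingEnd ℂ) z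
          = g 0 * (starRingEnd ℂ) z
            - ((starRingEnd ℂ) (g 0) * z) * (z * (starRingEnd ℂ) z)
            - g z * (starRingEnd ℂ) z := by
        simp only [hHdef]; ring
      have hconj : ((starRingEnd ℂ) (g 0) * z).re = (g 0 * (starRingEnd ℂ) z).re := by
        have h5 : (starRingEnd ℂ) (g 0) * z = (starRingEnd ℂ) (g 0 * (starRingEnd ℂ) z) := by
          simp [map_mul]
        rw [h5, Complex.conj_re]
      rw [e1, Complex.mul_conj, hnq, Complex.sub_re, Complex.sub_re,
        mul_comm ((starRingEnd ℂ) (g 0) * z) (((t^2 : ℝ) : ℂ)), Complex.re_ofReal_mul, hconj]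
      ring
    have hre0 : (g 0 * (starRingEnd ℂ) z).re ≥ -‖g 0‖ := by
      have := Complex.abs_re_le_norm (g 0 * (starRingEnd ℂ) z)
      have habs : ‖g 0 * (starRingEnd ℂ) z‖ ≤ ‖g 0‖ := by
        rw [norm_mul]
        have : ‖(starRingEnd ℂ) z‖ = t := by
          rw [Complex.norm_conj]
        rw [this]
        nlinarith [norm_nonneg (g 0)]
      nlinarith [abs_nonneg ((g 0 * (starRingEnd ℂ) z).re), le_abs_self (-(g 0 * (starRingEnd ℂ) z).re), neg_abs_le ((g 0 * (starRingEnd ℂ) z).re)]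
    have hgz : (g z * (starRingEnd ℂ) z).re ≤ |b| * (1 - t^2) := by
      refine le_trans (hineq z hεz h1z) ?_
      have : (0:ℝ) ≤ 1 - t^2 := by nlinarith [norm_nonneg z]
      nlinarith [le_abs_self b]
    have ht2 : (1:ℝ)/4 ≤ t^2 := by nlinarith
    have ht21 : t^2 ≤ 1 := by nlinarith [norm_nonneg z]
    have hnum : (H z * (starRingEnd ℂ) z).re ≥ -((‖g 0‖ + |b|) * (1 - t^2)) := by
      rw [hHexp]
      nlinarith
    rw [hqre, neg_le, le_div_iff₀ (by nlinarith : (0:ℝ) < t^2), hC]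
    nlinarith [hnum, mul_nonneg (mul_nonneg
      (by positivity : (0:ℝ) ≤ ‖g 0‖ + |b|)
      (by nlinarith : (0:ℝ) ≤ 1 - t^2)) (by nlinarith : (0:ℝ) ≤ 4*t^2 - 1)]
  -- maximum principle
  intro z0 hz0
  by_contra hcon
  push_neg at hcon
  set δ : ℝ := -(q z0).re with hδdef
  have hδ0 : 0 < δ := by simp only [hδdef]; linarith
  have hz0n : ‖z0‖ < 1 := by simpa [mem_ball, dist_zero_right] using hz0
  set m : ℝ := max (max (1 - ε) (1/2)) ‖z0‖ with hm
  have hm1 : m < 1 := max_lt (max_lt (by linarith) (by norm_num)) hz0n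
  set s : ℝ := max ((m+1)/2) (1 - δ/(2*(C+1))) with hs
  have hsm : m < s := lt_of_lt_of_le (by linarith) (le_max_left _ _)
  have hs1 : s < 1 := max_lt (by linarith) (by
    have : 0 < δ/(2*(C+1)) := by positivity
    linarith)
  have hs0 : 0 < s := by
    have : (1:ℝ)/2 ≤ m := le_trans (le_max_right _ _) (le_max_left _ _)
    linarith
  have hFnorm : ∀ z ∈ sphere (0:ℂ) s, ‖Complex.exp (-(q z))‖ ≤ Real.exp (C * (1 - s^2)) := by
    intro z hz
    have hzn : ‖z‖ = s := by simpa using hz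
    rw [Complex.norm_exp]
    apply Real.exp_le_exp.2
    have h1 : 1/2 ≤ ‖z‖ := by
      rw [hzn]
      exact le_trans (le_trans (le_max_right _ _) (le_max_left _ _)) hsm.le
    have h2 : 1 - ε < ‖z‖ := by
      rw [hzn]
      exact lt_of_le_of_lt (le_trans (le_max_left _ _) (le_max_left _ _)) hsm
    have h3 : ‖z‖ < 1 := by rw [hzn]; exact hs1
    have := hbound z h1 h2 h3
    rw [hzn] at this
    simpa using this
  have hFdiff : DifferentiableOn ℂ (fun z => Complex.exp (-(q z))) (closure (ball (0:ℂ) s)) := by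
    refine DifferentiableOn.cexp ?_
    refine DifferentiableOn.neg ?_
    refine hqdiff.mono ?_
    refine le_trans closure_ball_subset_closedBall ?_
    exact closedBall_subset_ball hs1
  have hz0s : z0 ∈ ball (0:ℂ) s := by
    simp only [mem_ball, dist_zero_right]
    exact lt_of_le_of_lt (le_max_right _ _) hsm
  have hfr : ∀ z ∈ frontier (ball (0:ℂ) s), ‖Complex.exp (-(q z))‖ ≤ Real.exp (C * (1 - s^2)) := by
    rw [frontier_ball (0:ℂ) hs0.ne']
    exact hFnorm
  have hmax : ‖Complex.exp (-(q z0))‖ ≤ Real.exp (C * (1 - s^2)) :=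
    Complex.norm_le_of_forall_mem_frontier_norm_le isBounded_ball
      hFdiff.diffContOnCl hfr (subset_closure hz0s)
  rw [Complex.norm_exp] at hmax
  have hineq2 : δ ≤ C * (1 - s^2) := by
    have := Real.exp_le_exp.1 hmax
    simpa [hδdef] using this
  have hs2 : 1 - δ/(2*(C+1)) ≤ s := le_max_right _ _
  have hfinal : C * (1 - s^2) < δ := by
    have h1s : 1 - s ≤ δ/(2*(C+1)) := by linarith
    have : 1 - s^2 ≤ 2*(1 - s) := by nlinarith
    have h2 : 1 - s^2 ≤ δ/(C+1) := by
      have := mul_le_mul_of_nonneg_left h1s (by norm_num : (0:ℝ) ≤ 2)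
      calc 1 - s^2 ≤ 2*(1-s) := by nlinarith
        _ ≤ 2*(δ/(2*(C+1))) := by linarith
        _ = δ/(C+1) := by field_simp
    calc C * (1 - s^2) ≤ C * (δ/(C+1)) := mul_le_mul_of_nonneg_left h2 hC0
      _ < δ := by
          rw [← mul_div_assoc, div_lt_iff₀ (by linarith : (0:ℝ) < C+1)]
          nlinarith
  linarith

end AuxStmt8

theorem stmt8 (g : ℂ → ℂ) (hg : DifferentiableOn ℂ g (ball 0 1))
    (ε b : ℝ) (hε : 0 < ε)
    (hineq : ∀ ζ : ℂ, 1 - ε < ‖ζ‖ → ‖ζ‖ < 1 →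
      (g ζ * (starRingEnd ℂ) ζ).re ≤ b * (1 - ‖ζ‖ ^ 2)) :
    (∀ w ∈ ball (0:ℂ) 1, ∀ r : ℝ, 0 < r →
      ∃! ζ, ζ ∈ ball (0:ℂ) 1 ∧ ζ - w - (r : ℂ) * g ζ = 0) ∧
    ∃ q : ℂ → ℂ, DifferentiableOn ℂ q (ball 0 1) ∧
      (∀ ζ ∈ ball (0:ℂ) 1, 0 ≤ (q ζ).re) ∧
      ∀ ζ ∈ ball (0:ℂ) 1, g ζ = g 0 - (starRingEnd ℂ) (g 0) * ζ ^ 2 - ζ * q ζ := by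
  exact ⟨part_a hg ε b hε hineq, part_b hg ε b hε hineq⟩
end

section
/- For the function k(x) = x^{x/(x−1)} on [2, ∞), one has k''(x) < 0 for all x ≥ 2 wherever defined, and hence k(x) ≤ k'(2)·(x − 2) + k(2) = 4(1 − ln 2)·x + 4 − 8(1 − ln 2) for all x ≥ 2. -/
open Real Set Filter

noncomputable def gg (y : ℝ) : ℝ := Real.log y * (y / (y - 1))
noncomputable def gg1 (y : ℝ) : ℝ := (y - 1 - Real.log y) / (y - 1) ^ 2
noncomputable def kk1 (y : ℝ) : ℝ := gg1 y * Real.exp (gg y)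

lemma key_log {u : ℝ} (hu : 1 < u) : 2 * Real.log u < u - u⁻¹ := by
  set φ : ℝ → ℝ := fun u => u - u⁻¹ - 2 * Real.log u with hφdef
  have hd : ∀ x : ℝ, 0 < x → HasDerivAt φ ((x - 1)^2 / x^2) x := by
    intro x hx
    have h1 : HasDerivAt φ (1 - (-(x^2)⁻¹) - 2 * x⁻¹) x := by
      exact ((hasDerivAt_id x).sub (hasDerivAt_inv hx.ne')).sub
        ((Real.hasDerivAt_log hx.ne').const_mul 2)
    convert h1 using 1
    field_simp
    ring
  have hmono : StrictMonoOn φ (Set.Ici 1) := by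
    apply strictMonoOn_of_deriv_pos (convex_Ici 1)
    · intro x hx
      have hx0 : (0:ℝ) < x := lt_of_lt_of_le one_pos hx
      exact ((hd x hx0).continuousAt).continuousWithinAt
    · intro x hx
      rw [interior_Ici] at hx
      have hx1 : (1:ℝ) < x := hx
      have hx0 : (0:ℝ) < x := lt_trans one_pos hx
      rw [(hd x hx0).deriv]
      have : x - 1 ≠ 0 := by linarith
      positivity
  have h := hmono (Set.mem_Ici.mpr (le_refl (1:ℝ))) (Set.mem_Ici.mpr (le_of_lt hu)) hu
  simp [hφdef] at h
  linarith

lemma key_ineq {x : ℝ} (hx : 2 ≤ x) : x * Real.log x ^ 2 < (x - 1)^2 := by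
  have hx0 : (0:ℝ) < x := by linarith
  set u := Real.sqrt x with hu
  have hu1 : 1 < u := by
    rw [hu, show (1:ℝ) = Real.sqrt 1 by simp]
    exact Real.sqrt_lt_sqrt (by norm_num) (by linarith)
  have hu0 : 0 < u := lt_trans one_pos hu1
  have husq : u ^ 2 = x := Real.sq_sqrt hx0.le
  have hlog : Real.log x = 2 * Real.log u := by
    rw [← husq, Real.log_pow]; push_cast; ring
  have h1 : 2 * Real.log u < u - u⁻¹ := key_log hu1
  have h2 : u * (2 * Real.log u) < x - 1 := by
    have := mul_lt_mul_of_pos_left h1 hu0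
    calc u * (2 * Real.log u) < u * (u - u⁻¹) := this
      _ = u^2 - 1 := by field_simp
      _ = x - 1 := by rw [husq]
  have hL : 0 ≤ Real.log x := Real.log_nonneg (by linarith)
  have hlhs : 0 ≤ u * Real.log x := by positivity
  have h3 : u * Real.log x < x - 1 := by rw [hlog]; linarith [h2]
  calc x * Real.log x ^ 2 = (u * Real.log x)^2 := by rw [← husq]; ring
    _ < (x - 1)^2 := by
        apply sq_lt_sq' _ h3
        nlinarith

lemma hgg {x : ℝ} (hx : 1 < x) : HasDerivAt gg (gg1 x) x := by
  have hx0 : (0:ℝ) < x := lt_trans one_pos hx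
  have hne : x - 1 ≠ 0 := by intro h; linarith [h]
  have h1 : HasDerivAt (fun y : ℝ => y / (y - 1))
      ((1 * (x - 1) - x * 1) / (x - 1) ^ 2) x :=
    (hasDerivAt_id x).div ((hasDerivAt_id x).sub_const 1) hne
  have h2 := (Real.hasDerivAt_log hx0.ne').mul h1
  have : HasDerivAt gg (x⁻¹ * (x / (x - 1)) + Real.log x * ((1 * (x - 1) - x * 1) / (x - 1) ^ 2)) x := h2
  convert this using 1
  unfold gg1
  field_simp
  ring

lemma hgg1 {x : ℝ} (hx : 1 < x) :
    HasDerivAt gg1 (((1 - x⁻¹) * (x - 1) ^ 2 - (x - 1 - Real.log x) * (2 * (x - 1))) / ((x - 1) ^ 2) ^ 2) x := by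
  have hx0 : (0:ℝ) < x := lt_trans one_pos hx
  have hne : x - 1 ≠ 0 := by intro h; linarith [h]
  have hN : HasDerivAt (fun y : ℝ => y - 1 - Real.log y) (1 - x⁻¹) x := by
    exact ((hasDerivAt_id x).sub_const 1).sub (Real.hasDerivAt_log hx0.ne')
  have hD : HasDerivAt (fun y : ℝ => (y - 1) ^ 2) (2 * (x - 1)) x := by
    have := (((hasDerivAt_id x).sub_const 1)).pow 2
    exact this.congr_deriv (by norm_num)
  exact hN.div hD (pow_ne_zero 2 hne)

lemma hkk {x : ℝ} (hx : 1 < x) :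
    HasDerivAt (fun y : ℝ => y ^ (y / (y - 1))) (kk1 x) x := by
  have he : HasDerivAt (fun y => Real.exp (gg y)) (Real.exp (gg x) * gg1 x) x := (hgg hx).exp
  have heq : (fun y : ℝ => y ^ (y / (y - 1))) =ᶠ[nhds x] (fun y => Real.exp (gg y)) := by
    filter_upwards [Ioi_mem_nhds hx] with y hy
    have hy0 : (0:ℝ) < y := lt_trans one_pos hy
    rw [Real.rpow_def_of_pos hy0]; rfl
  have := he.congr_of_eventuallyEq heq
  simpa [kk1, mul_comm] using this

lemma hkk1 {x : ℝ} (hx : 1 < x) :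
    HasDerivAt kk1 ((x * Real.log x ^ 2 - (x - 1) ^ 2) / (x * (x - 1) ^ 4) * Real.exp (gg x)) x := by
  have hx0 : (0:ℝ) < x := lt_trans one_pos hx
  have hne : x - 1 ≠ 0 := by intro h; linarith [h]
  have h := (hgg1 hx).mul (hgg hx).exp
  have h' : HasDerivAt kk1
      (((1 - x⁻¹) * (x - 1) ^ 2 - (x - 1 - Real.log x) * (2 * (x - 1))) / ((x - 1) ^ 2) ^ 2 * Real.exp (gg x)
        + gg1 x * (Real.exp (gg x) * gg1 x)) x := h
  convert h' using 1
  unfold gg1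
  field_simp
  ring

lemma kk1_deriv_neg {x : ℝ} (hx : 2 ≤ x) :
    deriv kk1 x < 0 := by
  have hx1 : (1:ℝ) < x := by linarith
  rw [(hkk1 hx1).deriv]
  apply mul_neg_of_neg_of_pos _ (Real.exp_pos _)
  apply div_neg_of_neg_of_pos
  · linarith [key_ineq hx]
  · have h : (0:ℝ) < x - 1 := by linarith
    have h0 : (0:ℝ) < x := by linarith
    positivity

lemma kk1_two : kk1 2 = 4 * (1 - Real.log 2) := by
  unfold kk1 gg1 gg
  rw [show Real.log 2 * ((2:ℝ) / (2 - 1)) = Real.log 4 by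
    rw [show (4:ℝ) = 2 ^ (2:ℕ) by norm_num, Real.log_pow]; push_cast; ring]
  rw [Real.exp_log (by norm_num)]
  norm_num
  ring

lemma kk1_le {x : ℝ} (hx : 2 ≤ x) : kk1 x ≤ 4 * (1 - Real.log 2) := by
  rw [← kk1_two]
  have hanti : AntitoneOn kk1 (Set.Ici 2) := by
    apply antitoneOn_of_deriv_nonpos (convex_Ici 2)
    · intro y hy
      have hy1 : (1:ℝ) < y := lt_of_lt_of_le one_lt_two hy
      exact (hkk1 hy1).continuousAt.continuousWithinAt
    · intro y hy
      rw [interior_Ici] at hy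
      exact ((hkk1 (by linarith [mem_Ioi.mp hy] : (1:ℝ) < y)).differentiableAt).differentiableWithinAt
    · intro y hy
      rw [interior_Ici] at hy
      exact le_of_lt (kk1_deriv_neg (le_of_lt hy))
  exact hanti (by norm_num) hx hx

theorem stmt10 :
    (∀ x : ℝ, 2 ≤ x → deriv (deriv (fun y : ℝ => y ^ (y / (y - 1)))) x < 0) ∧
    (∀ x : ℝ, 2 ≤ x →
      x ^ (x / (x - 1)) ≤ 4 * (1 - Real.log 2) * x + 4 - 8 * (1 - Real.log 2)) := by
  constructor
  · intro x hx
    have hx1 : (1:ℝ) < x := by linarith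
    have heq : deriv (fun y : ℝ => y ^ (y / (y - 1))) =ᶠ[nhds x] kk1 := by
      filter_upwards [Ioi_mem_nhds hx1] with y hy
      exact (hkk hy).deriv
    rw [heq.deriv_eq]
    exact kk1_deriv_neg hx
  · intro x hx
    set c : ℝ := 4 * (1 - Real.log 2) with hc
    set F : ℝ → ℝ := fun y => c * y + 4 - 2 * c - y ^ (y / (y - 1)) with hF
    have hFd : ∀ y : ℝ, 1 < y → HasDerivAt F (c - kk1 y) y := by
      intro y hy
      have h1 : HasDerivAt (fun y : ℝ => c * y + 4 - 2 * c) c y := by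
        simpa using ((((hasDerivAt_id y).const_mul c).add_const 4).sub_const (2 * c))
      exact h1.sub (hkk hy)
    have hmono : MonotoneOn F (Set.Ici 2) := by
      apply monotoneOn_of_deriv_nonneg (convex_Ici 2)
      · intro y hy
        have hy1 : (1:ℝ) < y := lt_of_lt_of_le one_lt_two hy
        exact (hFd y hy1).continuousAt.continuousWithinAt
      · intro y hy
        rw [interior_Ici] at hy
        have hy1 : (1:ℝ) < y := by linarith [mem_Ioi.mp hy]
        exact (hFd y hy1).differentiableAt.differentiableWithinAt
      · intro y hy
        rw [interior_Ici] at hy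
        have hy2 : (2:ℝ) ≤ y := le_of_lt hy
        rw [(hFd y (by linarith)).deriv]
        linarith [kk1_le hy2]
    have hF2 : F 2 = 0 := by
      have : (2:ℝ) ^ ((2:ℝ) / (2 - 1)) = 4 := by
        rw [show ((2:ℝ) / (2 - 1)) = ((2:ℕ):ℝ) by norm_num, Real.rpow_natCast]
        norm_num
      simp [hF, this]
      ring
    have := hmono (by norm_num : (2:ℝ) ∈ Set.Ici 2) hx hx
    rw [hF2] at this
    simp only [hF] at this
    linarith
end

section
/- Let X be a complex Banach space and P_m : X → X a continuous homogeneous polynomial of degree m ≥ 2. Then ‖P_m‖ := sup_{‖v‖=1} ‖P_m(v)‖ ≤ m^{m/(m−1)} · V(P_m), where V(P_m) = sup{|⟨P_m(v), v*⟩| : ‖v‖ = 1, v* a supporting functional at v}. For m = 1 (a bounded linear operator), ‖P_1‖ ≤ e·V(P_1). -/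
open Complex Metric

noncomputable def harrisIter {X : Type*} [NormedAddCommGroup X] [NormedSpace ℂ X]
    (P : X → X) (n : ℕ) (v : X) : ℕ → ℂ → X
  | 0 => fun _ => v
  | (k+1) => fun ζ => harrisIter P n v k ζ + (ζ / (n : ℂ)) • P (harrisIter P n v k ζ)

lemma pow_succ_sub_le (k : ℕ) {a b : ℝ} (ha : 0 ≤ a) (hab : a ≤ b) :
    b ^ (k+1) ≤ a ^ (k+1) + (k+1) * b ^ k * (b - a) := by
  induction k with
  | zero => simpa using by nlinarith
  | succ k ih =>
    have hb : 0 ≤ b := ha.trans hab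
    have h2 : a ^ (k+1) ≤ b ^ (k+1) := pow_le_pow_left₀ ha hab _
    have hbk : (0:ℝ) ≤ b ^ (k+1) := pow_nonneg hb _
    have hak : (0:ℝ) ≤ a ^ (k+1) := pow_nonneg ha _
    calc b ^ (k+2) = b * b ^ (k+1) := by ring
      _ ≤ b * (a ^ (k+1) + (k+1) * b ^ k * (b - a)) := by
          apply mul_le_mul_of_nonneg_left ih hb
      _ = b * a ^ (k+1) + (k+1) * (b * b ^ k) * (b - a) := by ring
      _ = b * a ^ (k+1) + (k+1) * b ^ (k+1) * (b - a) := by rw [← pow_succ']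
      _ = a ^ (k+2) + (b - a) * a ^ (k+1) + (k+1) * b ^ (k+1) * (b - a) := by ring
      _ ≤ a ^ (k+2) + (b - a) * b ^ (k+1) + (k+1) * b ^ (k+1) * (b - a) := by nlinarith
      _ = a ^ (k+1+1) + ((k+1:ℕ) + 1) * b ^ (k+1) * (b - a) := by push_cast; ring

set_option maxHeartbeats 1000000 in
lemma harris_engine {X : Type*} [NormedAddCommGroup X] [NormedSpace ℂ X]
    (ν : ℕ) (L : ContinuousMultilinearMap ℂ (fun _ : Fin (ν+1) => X) X)
    (V : ℝ) (hV0 : 0 ≤ V)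
    (hV : ∀ z : X, ‖z‖ = 1 → ∀ f : X →L[ℂ] ℂ, ‖f‖ = 1 → f z = 1 →
      ‖f (L fun _ => z)‖ ≤ V)
    (v : X) (hv : ‖v‖ = 1)
    (r : ℝ) (hr : 0 < r) (W : ℝ → ℝ) (ε : ℝ) (hε : 0 < ε)
    (hW1 : ∀ t, 0 ≤ t → t ≤ r → 1 ≤ W t)
    (hW2 : ∀ t η, 0 ≤ t → 0 ≤ η → t + η ≤ r →
      W t + η * (V * W t ^ (ν+1) + ε) ≤ W (t + η)) :
    ‖L fun _ => v‖ ≤ W r / r := by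
  set P : X → X := fun x => L fun _ => x with hPdef
  have hPnorm : ∀ x : X, ‖P x‖ ≤ ‖L‖ * ‖x‖ ^ (ν+1) := by
    intro x
    calc ‖L fun _ => x‖ ≤ ‖L‖ * ∏ _i : Fin (ν+1), ‖x‖ := L.le_opNorm _
      _ = ‖L‖ * ‖x‖ ^ (ν+1) := by rw [Finset.prod_const, Finset.card_univ, Fintype.card_fin]
  have hPdiff : Differentiable ℂ P := by
    intro x
    have h1 : HasFDerivAt (fun y : Fin (ν+1) → X => L y) (L.linearDeriv (fun _ => x)) _ :=
      L.hasFDerivAt (x := fun _ => x)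
    have h2 : HasFDerivAt (fun y : X => (fun _ : Fin (ν+1) => y))
        (ContinuousLinearMap.pi fun _ : Fin (ν+1) => ContinuousLinearMap.id ℂ X) x :=
      (ContinuousLinearMap.pi fun _ : Fin (ν+1) => ContinuousLinearMap.id ℂ X).hasFDerivAt
    exact (h1.comp x h2).differentiableAt
  set R := W r with hRdef
  have hR1 : 1 ≤ R := hW1 r hr.le le_rfl
  have hWpos : ∀ t, 0 ≤ t → t ≤ r → 0 < W t := fun t h1 h2 => lt_of_lt_of_le one_pos (hW1 t h1 h2)
  have hWle : ∀ t, 0 ≤ t → t ≤ r → W t ≤ R := by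
    intro t ht htr
    have h := hW2 t (r - t) ht (by linarith) (by linarith)
    have h2 : 0 ≤ (r - t) * (V * W t ^ (ν+1) + ε) := by
      have h3 : 0 ≤ W t ^ (ν+1) := pow_nonneg (hWpos t ht htr).le _
      have h4 := mul_nonneg hV0 h3
      apply mul_nonneg (by linarith) (by linarith)
    rw [hRdef]
    have : t + (r - t) = r := by ring
    rw [this] at h
    linarith
  set Pb := ‖L‖ * (R+1)^(ν+1) with hPbdef
  have hPb0 : 0 ≤ Pb := by positivity
  have hPxb : ∀ x : X, ‖x‖ ≤ R + 1 → ‖P x‖ ≤ Pb := by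
    intro x hx
    refine (hPnorm x).trans ?_
    exact mul_le_mul_of_nonneg_left (pow_le_pow_left₀ (norm_nonneg x) hx (ν+1)) (norm_nonneg L)
  set C := ‖L‖ * (ν+1) * (R+1)^ν * Pb with hCdef
  have hC0 : 0 ≤ C := by positivity
  set D := ((ν+1) : ℝ) * (R+1)^ν * Pb with hDdef
  have hD0 : 0 ≤ D := by positivity
  -- one-step estimate
  have key : ∀ (x : X) (h' : ℂ), ‖x‖ ≤ R + 1 → ‖h'‖ ≤ 1 → ‖x + h' • P x‖ ≤ R + 1 →
      ‖x + h' • P x‖ ≤ ‖x‖ + ‖h'‖ * (V * ‖x + h' • P x‖ ^ (ν+1)) + ‖h'‖^2 * C := by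
    intro x h' hx hh hyb
    set y := x + h' • P x with hy
    by_cases h0 : y = 0
    · rw [h0, norm_zero, zero_pow (Nat.succ_ne_zero ν), mul_zero, mul_zero]
      positivity
    · obtain ⟨f, hf1, hf2⟩ := exists_dual_vector ℂ y (norm_ne_zero_iff.2 h0)
      have hyne : ‖y‖ ≠ 0 := norm_ne_zero_iff.2 h0
      have hzc : ((‖y‖ : ℂ)) ≠ 0 := by exact_mod_cast hyne
      set z : X := ((‖y‖ : ℂ))⁻¹ • y with hz
      have hz1 : ‖z‖ = 1 := by
        rw [hz, norm_smul, norm_inv, Complex.norm_real, Real.norm_eq_abs, abs_norm,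
          inv_mul_cancel₀ hyne]
      have hf2' : f y = ((‖y‖ : ℝ) : ℂ) := hf2
      have hfz : f z = 1 := by
        rw [hz, map_smul, hf2', smul_eq_mul, inv_mul_cancel₀ hzc]
      have hfPz := hV z hz1 f hf1 hfz
      have hyz : y = ((‖y‖ : ℂ)) • z := by
        rw [hz, smul_smul, mul_inv_cancel₀ hzc, one_smul]
      have hPy : P y = ((‖y‖ : ℂ))^(ν+1) • P z := by
        show (L fun _ => y) = _
        conv_lhs => rw [hyz]
        have := L.map_smul_univ (fun _ : Fin (ν+1) => ((‖y‖ : ℂ))) (fun _ => z)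
        rw [this, Finset.prod_const, Finset.card_univ, Fintype.card_fin]
      have hfPy : ‖f (P y)‖ ≤ V * ‖y‖^(ν+1) := by
        rw [hPy, map_smul, smul_eq_mul, norm_mul, norm_pow, Complex.norm_real,
          Real.norm_eq_abs, abs_norm]
        rw [mul_comm V]
        exact mul_le_mul_of_nonneg_left (show ‖f (P z)‖ ≤ V from hfPz) (by positivity)
      have hxy : ‖x - y‖ ≤ ‖h'‖ * Pb := by
        have : x - y = -(h' • P x) := by rw [hy]; abel
        rw [this, norm_neg, norm_smul]
        exact mul_le_mul_of_nonneg_left (hPxb x hx) (norm_nonneg h')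
      have hdiff : ‖P x - P y‖ ≤ ‖h'‖ * C := by
        have h1 := L.norm_image_sub_le (fun _ => x) (fun _ => y)
        have e1 : ‖(fun _ : Fin (ν+1) => x)‖ = ‖x‖ := by
          simpa using Pi.norm_const (ι := Fin (ν+1)) x
        have e2 : ‖(fun _ : Fin (ν+1) => y)‖ = ‖y‖ := by
          simpa using Pi.norm_const (ι := Fin (ν+1)) y
        have e3 : ((fun _ : Fin (ν+1) => x) - fun _ => y) = fun _ : Fin (ν+1) => x - y := rfl
        have e4 : ‖(fun _ : Fin (ν+1) => x) - fun _ => y‖ = ‖x - y‖ := by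
          rw [e3]; simpa using Pi.norm_const (ι := Fin (ν+1)) (x - y)
        rw [e1, e2, e4, Fintype.card_fin] at h1
        have hmax : max ‖x‖ ‖y‖ ≤ R + 1 := max_le hx hyb
        have hmax0 : 0 ≤ max ‖x‖ ‖y‖ := le_max_of_le_left (norm_nonneg x)
        have h5 : max ‖x‖ ‖y‖ ^ ((ν+1) - 1) ≤ (R+1) ^ ((ν+1) - 1) :=
          pow_le_pow_left₀ hmax0 hmax _
        calc ‖P x - P y‖ ≤ ‖L‖ * ((ν+1:ℕ):ℝ) * max ‖x‖ ‖y‖ ^ ((ν+1)-1) * ‖x - y‖ := h1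
          _ ≤ ‖L‖ * ((ν+1:ℕ):ℝ) * (R+1) ^ ((ν+1)-1) * (‖h'‖ * Pb) := by
              exact mul_le_mul (mul_le_mul_of_nonneg_left h5 (by positivity)) hxy
                (norm_nonneg _) (by positivity)
          _ = ‖h'‖ * C := by
              rw [hCdef]
              simp only [Nat.add_sub_cancel]
              push_cast
              ring
      have hfPx : ‖f (P x)‖ ≤ V * ‖y‖^(ν+1) + ‖h'‖ * C := by
        have e : f (P x) = f (P y) + f (P x - P y) := by rw [map_sub]; ring
        calc ‖f (P x)‖ ≤ ‖f (P y)‖ + ‖f (P x - P y)‖ := by rw [e]; exact norm_add_le _ _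
          _ ≤ V * ‖y‖^(ν+1) + ‖f‖ * ‖P x - P y‖ := by
              gcongr
              exact f.le_opNorm _
          _ ≤ V * ‖y‖^(ν+1) + ‖h'‖ * C := by rw [hf1, one_mul]; gcongr
      have hfy2 : f y = f x + h' * f (P x) := by
        rw [hy, map_add, map_smul, smul_eq_mul]
      have hfx : ‖f x‖ ≤ ‖x‖ := by
        calc ‖f x‖ ≤ ‖f‖ * ‖x‖ := f.le_opNorm x
          _ = ‖x‖ := by rw [hf1, one_mul]
      have hynorm : ‖y‖ = ‖f y‖ := by
        rw [hf2', Complex.norm_real, Real.norm_eq_abs, abs_norm]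
      calc ‖y‖ = ‖f y‖ := hynorm
        _ ≤ ‖f x‖ + ‖h'‖ * ‖f (P x)‖ := by
            rw [hfy2]
            refine (norm_add_le _ _).trans ?_
            rw [norm_mul]
        _ ≤ ‖x‖ + ‖h'‖ * (V * ‖y‖^(ν+1) + ‖h'‖ * C) := by
            gcongr
        _ = ‖x‖ + ‖h'‖ * (V * ‖y‖^(ν+1)) + ‖h'‖^2 * C := by ring
  -- choose n large
  have hVDC : 0 ≤ V * D + C := by nlinarith [mul_nonneg hV0 hD0]
  set K := 1 + Pb + (V * D + C) / ε with hKdef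
  have hdivnn : 0 ≤ (V * D + C) / ε := div_nonneg hVDC hε.le
  have hK1 : 1 ≤ K := by rw [hKdef]; linarith
  have hK0 : 0 < K := by linarith
  obtain ⟨n, hn⟩ := exists_nat_gt (r * K)
  have hrK : 0 < r * K := mul_pos hr hK0
  have hnR : (0:ℝ) < n := lt_trans hrK hn
  have hn0 : 0 < n := by exact_mod_cast hnR
  have hhK : r / n < 1 / K := by
    rw [div_lt_div_iff₀ hnR hK0]
    linarith
  have hrn0 : 0 ≤ r / n := by positivity
  have hh1 : r / n ≤ 1 := by
    have : 1 / K ≤ 1 := by rw [div_le_one hK0]; exact hK1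
    linarith
  have hhPb : (r / n) * Pb ≤ 1 := by
    have h2 : (r/n) * Pb ≤ (1/K) * Pb := mul_le_mul_of_nonneg_right hhK.le hPb0
    have h3 : (1/K) * Pb ≤ 1 := by
      rw [div_mul_eq_mul_div, one_mul, div_le_one hK0, hKdef]
      linarith
    linarith
  have hhε : (r / n) * (V * D + C) ≤ ε := by
    have h2 : (r/n) * (V*D + C) ≤ (1/K) * (V*D+C) := mul_le_mul_of_nonneg_right hhK.le hVDC
    have h3 : (1/K) * (V*D+C) ≤ ε := by
      rw [div_mul_eq_mul_div, one_mul, div_le_iff₀ hK0, hKdef]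
      have e : ε * (1 + Pb + (V*D+C)/ε) = ε + ε*Pb + (V*D+C) := by
        field_simp
      rw [e]
      nlinarith [mul_nonneg hε.le hPb0]
    linarith
  clear_value R Pb C D K
  set Y := harrisIter P n v with hYdef
  have hYs : ∀ k ζ, Y (k+1) ζ = Y k ζ + (ζ / (n:ℂ)) • P (Y k ζ) := fun k ζ => rfl
  have hY0 : ∀ ζ, Y 0 ζ = v := fun _ => rfl
  -- iteration bound
  have hbound : ∀ (ζ : ℂ), ‖ζ‖ ≤ r → ∀ k, k ≤ n → ‖Y k ζ‖ ≤ W ((k : ℝ) * r / n) := by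
    intro ζ hζ k
    induction k with
    | zero =>
      intro _
      have : ((0:ℕ):ℝ) * r / n = 0 := by simp
      rw [this, hY0, hv]
      exact hW1 0 le_rfl hr.le
    | succ k ih =>
      intro hk1
      have hk : k ≤ n := Nat.le_of_succ_le hk1
      have ihk := ih hk
      have htk0 : 0 ≤ (k:ℝ) * r / n := by positivity
      have hkn : (k:ℝ) ≤ n := by exact_mod_cast hk
      have hk1n : (k:ℝ) + 1 ≤ n := by exact_mod_cast hk1
      have htkr : (k:ℝ) * r / n ≤ r := by
        rw [div_le_iff₀ hnR]
        nlinarith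
      have hWtk := hWle _ htk0 htkr
      have hxR : ‖Y k ζ‖ ≤ R := ihk.trans hWtk
      have hh' : ‖ζ / (n:ℂ)‖ ≤ r / n := by
        rw [norm_div]
        have e : ‖(n:ℂ)‖ = (n:ℝ) := by simp
        rw [e]
        gcongr
      have hh'1 : ‖ζ / (n:ℂ)‖ ≤ 1 := hh'.trans hh1
      have hPxk : ‖P (Y k ζ)‖ ≤ Pb := hPxb _ (by linarith)
      have hcrude : ‖Y (k+1) ζ‖ ≤ ‖Y k ζ‖ + (r/n) * Pb := by
        rw [hYs]
        refine (norm_add_le _ _).trans ?_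
        rw [norm_smul]
        have := mul_le_mul hh' hPxk (norm_nonneg _) hrn0
        linarith
      have hyR1 : ‖Y (k+1) ζ‖ ≤ R + 1 := by linarith
      have hkey : ‖Y (k+1) ζ‖ ≤ ‖Y k ζ‖ + ‖ζ/(n:ℂ)‖ * (V * ‖Y (k+1) ζ‖^(ν+1))
          + ‖ζ/(n:ℂ)‖^2 * C := key (Y k ζ) (ζ/(n:ℂ)) (by linarith) hh'1 hyR1
      have hb0 : 0 ≤ ‖Y (k+1) ζ‖ := norm_nonneg _
      have hW0 : 0 < W ((k:ℝ)*r/n) := hWpos _ htk0 htkr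
      have hpow : ‖Y (k+1) ζ‖^(ν+1) ≤ W ((k:ℝ)*r/n)^(ν+1) + (r/n) * D := by
        by_cases hab : ‖Y (k+1) ζ‖ ≤ W ((k:ℝ)*r/n)
        · have h7 : ‖Y (k+1) ζ‖^(ν+1) ≤ W ((k:ℝ)*r/n)^(ν+1) :=
            pow_le_pow_left₀ hb0 hab _
          nlinarith [mul_nonneg hrn0 hD0]
        · push_neg at hab
          have h6 := pow_succ_sub_le ν hW0.le hab.le
          have hbν : ‖Y (k+1) ζ‖^ν ≤ (R+1)^ν := pow_le_pow_left₀ hb0 hyR1 _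
          have hbW : ‖Y (k+1) ζ‖ - W ((k:ℝ)*r/n) ≤ (r/n) * Pb := by linarith
          have hbW0 : 0 ≤ ‖Y (k+1) ζ‖ - W ((k:ℝ)*r/n) := by linarith
          have hR10 : (0:ℝ) ≤ R + 1 := by linarith
          have h8 : ((ν:ℝ)+1) * ‖Y (k+1) ζ‖^ν * (‖Y (k+1) ζ‖ - W ((k:ℝ)*r/n))
              ≤ ((ν:ℝ)+1) * (R+1)^ν * ((r/n)*Pb) := by
            apply mul_le_mul _ hbW hbW0
              (mul_nonneg (by positivity) (pow_nonneg hR10 ν))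
            apply mul_le_mul_of_nonneg_left hbν (by positivity)
          have hDD : ((ν:ℝ)+1) * (R+1)^ν * ((r/n)*Pb) = (r/n) * D := by
            rw [hDdef]; push_cast; ring
          linarith
      -- combine
      have e1 : ‖ζ/(n:ℂ)‖ * (V * ‖Y (k+1) ζ‖^(ν+1)) ≤ (r/n) * (V * ‖Y (k+1) ζ‖^(ν+1)) :=
        mul_le_mul_of_nonneg_right hh' (by positivity)
      have e2 : ‖ζ/(n:ℂ)‖^2 * C ≤ (r/n)^2 * C := by
        apply mul_le_mul_of_nonneg_right _ hC0
        exact pow_le_pow_left₀ (norm_nonneg _) hh' 2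
      have e3 : V * ‖Y (k+1) ζ‖^(ν+1) ≤ V * W ((k:ℝ)*r/n)^(ν+1) + V * ((r/n) * D) := by
        have e3' := mul_le_mul_of_nonneg_left hpow hV0
        rw [mul_add] at e3'
        exact e3'
      have e4 : (r/n) * (V * ‖Y (k+1) ζ‖^(ν+1))
          ≤ (r/n) * (V * W ((k:ℝ)*r/n)^(ν+1)) + (r/n)^2 * (V * D) := by
        have e4' := mul_le_mul_of_nonneg_left e3 hrn0
        have e4'' : (r/n) * (V * W ((k:ℝ)*r/n)^(ν+1) + V * ((r/n) * D))
            = (r/n) * (V * W ((k:ℝ)*r/n)^(ν+1)) + (r/n)^2 * (V * D) := by ring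
        rw [e4''] at e4'
        exact e4'
      have e5 : (r/n)^2 * (V*D) + (r/n)^2 * C ≤ (r/n) * ε := by
        have e5' := mul_le_mul_of_nonneg_left hhε hrn0
        have e5'' : (r/n) * ((r/n) * (V*D+C)) = (r/n)^2 * (V*D) + (r/n)^2 * C := by ring
        rw [e5''] at e5'
        exact e5'
      have hWk := hW2 ((k:ℝ)*r/n) (r/n) htk0 hrn0 (by
        rw [← add_div, div_le_iff₀ hnR]
        have : ((k:ℝ)+1) * r ≤ (n:ℝ) * r := mul_le_mul_of_nonneg_right hk1n hr.le
        linarith)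
      have earg : ((k+1:ℕ):ℝ) * r / n = (k:ℝ)*r/n + r/n := by push_cast; ring
      rw [earg]
      linarith
  -- differentiability
  have hYdiff : ∀ k, Differentiable ℂ (Y k) := by
    intro k
    induction k with
    | zero => exact differentiable_const v
    | succ k ih =>
      have h1 : Differentiable ℂ (fun ζ : ℂ => ζ / (n:ℂ)) := differentiable_id.div_const _
      exact ih.add (h1.smul (hPdiff.comp ih))
  -- derivative at 0
  have hYder : ∀ k, Y k 0 = v ∧ HasDerivAt (Y k) (((k:ℂ) / (n:ℂ)) • P v) 0 := by
    intro k
    induction k with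
    | zero =>
      refine ⟨rfl, ?_⟩
      have : (((0:ℕ):ℂ) / (n:ℂ)) • P v = 0 := by
        rw [Nat.cast_zero, zero_div, zero_smul]
      rw [this]
      exact hasDerivAt_const 0 v
    | succ k ih =>
      obtain ⟨h0k, hdk⟩ := ih
      have hc : HasDerivAt (fun ζ : ℂ => ζ / (n:ℂ)) (1 / (n:ℂ)) 0 := by
        simpa using (hasDerivAt_id (0:ℂ)).div_const (n:ℂ)
      have hf : HasDerivAt (fun ζ => P (Y k ζ)) (deriv (fun ζ => P (Y k ζ)) 0) 0 :=
        ((hPdiff.comp (hYdiff k)) 0).hasDerivAt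
      have hs := hc.smul hf
      constructor
      · show Y k 0 + ((0:ℂ) / (n:ℂ)) • P (Y k 0) = v
        rw [h0k]
        simp
      · have hsum := hdk.add hs
        have : Y (k+1) = fun ζ => Y k ζ + (ζ / (n:ℂ)) • P (Y k ζ) := rfl
        rw [this]
        convert hsum using 1
        rfl
        rw [h0k]
        push_cast
        simp only [zero_div, zero_smul, zero_add]
        rw [← add_smul]
        congr 1
        field_simp
  -- conclude via Cauchy estimate
  have hnC : ((n:ℂ)) ≠ 0 := by
    simp only [ne_eq, Nat.cast_eq_zero]
    exact hn0.ne'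
  obtain ⟨hY0n, hdn⟩ := hYder n
  have hder : HasDerivAt (Y n) (P v) 0 := by
    have : ((n:ℂ) / (n:ℂ)) • P v = P v := by rw [div_self hnC, one_smul]
    rwa [this] at hdn
  have hd : DiffContOnCl ℂ (Y n) (ball (0:ℂ) r) := (hYdiff n).diffContOnCl
  have hb : ∀ z ∈ sphere (0:ℂ) r, ‖Y n z‖ ≤ W r := by
    intro z hz
    rw [mem_sphere_zero_iff_norm] at hz
    have h1 := hbound z hz.le n le_rfl
    have h2 : (n:ℝ)*r/n = r := by field_simp
    rwa [h2] at h1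
  have hfin := Complex.norm_deriv_le_of_forall_mem_sphere_norm_le hr hd hb
  rw [hder.deriv] at hfin
  rw [hRdef]
  exact hfin

set_option maxHeartbeats 1000000 in
lemma harris_poly_step {X : Type*} [NormedAddCommGroup X] [NormedSpace ℂ X]
    (ν : ℕ) (hν : 1 ≤ ν) (L : ContinuousMultilinearMap ℂ (fun _ : Fin (ν+1) => X) X)
    (V : ℝ) (hV0 : 0 ≤ V)
    (hV : ∀ z : X, ‖z‖ = 1 → ∀ f : X →L[ℂ] ℂ, ‖f‖ = 1 → f z = 1 →
      ‖f (L fun _ => z)‖ ≤ V)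
    (v : X) (hv : ‖v‖ = 1) (δ : ℝ) (hδ : 0 < δ) :
    ‖L fun _ => v‖ ≤ ((ν:ℝ)+1) ^ (((ν:ℝ)+1)/(ν:ℝ)) * (V + δ) := by
  have hν1 : (1:ℝ) ≤ (ν:ℝ) := by exact_mod_cast hν
  have hν0 : (0:ℝ) < (ν:ℝ) := by linarith
  set V' := V + δ with hV'def
  have hV'0 : 0 < V' := by rw [hV'def]; linarith
  set c : ℝ := (ν:ℝ) * V' with hcdef
  have hc0 : 0 < c := by rw [hcdef]; positivity
  set r : ℝ := 1 / (((ν:ℝ)+1) * V') with hrdef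
  have hr : 0 < r := by rw [hrdef]; positivity
  set p : ℝ := -(1/(ν:ℝ)) with hpdef
  have hp0 : p ≤ 0 := by
    have : (0:ℝ) ≤ 1/(ν:ℝ) := by positivity
    rw [hpdef]; linarith
  set W : ℝ → ℝ := fun t => (1 - c*t) ^ p with hWdef
  have hcr : c * r = (ν:ℝ) / ((ν:ℝ)+1) := by
    rw [hcdef, hrdef]
    field_simp
  have hbase : ∀ t, 0 ≤ t → t ≤ r → 1/((ν:ℝ)+1) ≤ 1 - c*t := by
    intro t ht htr
    have h1 : c * t ≤ c * r := mul_le_mul_of_nonneg_left htr hc0.le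
    rw [hcr] at h1
    have h2 : (ν:ℝ)/((ν:ℝ)+1) + 1/((ν:ℝ)+1) = 1 := by
      field_simp
    linarith
  have hbasepos : ∀ t, 0 ≤ t → t ≤ r → 0 < 1 - c*t := by
    intro t ht htr
    have := hbase t ht htr
    have h2 : (0:ℝ) < 1/((ν:ℝ)+1) := by positivity
    linarith
  have hbase1 : ∀ t, 0 ≤ t → 1 - c*t ≤ 1 := by
    intro t ht
    have := mul_nonneg hc0.le ht
    linarith
  have hW1 : ∀ t, 0 ≤ t → t ≤ r → 1 ≤ W t := by
    intro t ht htr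
    exact Real.one_le_rpow_of_pos_of_le_one_of_nonpos (hbasepos t ht htr) (hbase1 t ht) hp0
  have hder : ∀ s, 0 ≤ s → s ≤ r → HasDerivAt W (V' * (1 - c*s) ^ (p-1)) s := by
    intro s hs hsr
    have hx : 0 < 1 - c*s := hbasepos s hs hsr
    have h1 : HasDerivAt (fun u : ℝ => 1 - c*u) (-c) s := by
      simpa using ((hasDerivAt_id s).const_mul c).const_sub 1
    have h2 : HasDerivAt (fun x : ℝ => x ^ p) (p * (1 - c*s) ^ (p-1)) (1 - c*s) :=
      Real.hasDerivAt_rpow_const (Or.inl hx.ne')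
    have h3 := h2.comp s h1
    have h4 : p * (1 - c*s) ^ (p-1) * (-c) = V' * (1 - c*s) ^ (p-1) := by
      have h5 : p * (-c) = V' := by
        rw [hpdef, hcdef]
        field_simp
      calc p * (1 - c*s) ^ (p-1) * (-c) = (p * (-c)) * (1 - c*s) ^ (p-1) := by ring
        _ = V' * (1 - c*s) ^ (p-1) := by rw [h5]
    rw [← h4]
    exact h3
  have hWpow : ∀ t, 0 ≤ t → t ≤ r → W t ^ (ν+1) = (1 - c*t) ^ (p-1) := by
    intro t ht htr
    have hx : 0 < 1 - c*t := hbasepos t ht htr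
    show ((1 - c*t) ^ p) ^ (ν+1) = (1 - c*t) ^ (p-1)
    rw [← Real.rpow_natCast ((1 - c*t) ^ p) (ν+1), ← Real.rpow_mul hx.le]
    congr 1
    rw [hpdef]
    push_cast
    field_simp
    ring
  have hW2 : ∀ t η, 0 ≤ t → 0 ≤ η → t + η ≤ r →
      W t + η * (V * W t ^ (ν+1) + δ) ≤ W (t + η) := by
    intro t η ht hη htηr
    rcases eq_or_lt_of_le hη with h | hηpos
    · rw [← h]
      simp
    have htr : t ≤ r := by linarith
    have h1W : 1 ≤ W t := hW1 t ht htr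
    obtain ⟨ξ, hξ, hslope⟩ := exists_hasDerivAt_eq_slope W
        (fun s => V' * (1 - c*s) ^ (p-1)) (by linarith : t < t + η)
        (fun s hs => by
          have hs1 : 0 ≤ s := le_trans ht hs.1
          exact ((hder s hs1 (le_trans hs.2 htηr)).continuousAt).continuousWithinAt)
        (fun s hs => hder s (le_trans ht hs.1.le) (le_trans hs.2.le htηr))
    have hξ0 : 0 ≤ ξ := le_trans ht hξ.1.le
    have hξr : ξ ≤ r := le_trans hξ.2.le htηr
    have hmono : (1 - c*t) ^ (p-1) ≤ (1 - c*ξ) ^ (p-1) := by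
      apply Real.rpow_le_rpow_of_nonpos (hbasepos ξ hξ0 hξr)
      · have : c * t ≤ c * ξ := mul_le_mul_of_nonneg_left hξ.1.le hc0.le
        linarith
      · linarith
    have hWξ : V' * (1 - c*t) ^ (p-1) ≤ V' * (1 - c*ξ) ^ (p-1) :=
      mul_le_mul_of_nonneg_left hmono hV'0.le
    rw [show t + η - t = η from by ring] at hslope
    have h5 := (eq_div_iff (ne_of_gt hηpos)).mp hslope
    have hslope2 : W (t+η) - W t = η * (V' * (1 - c*ξ) ^ (p-1)) := by
      rw [← h5]; ring
    have hstep : η * (V' * (1 - c*t) ^ (p-1)) ≤ W (t+η) - W t := by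
      rw [hslope2]
      exact mul_le_mul_of_nonneg_left hWξ hη
    rw [← hWpow t ht htr] at hstep
    have hWpk : 1 ≤ W t ^ (ν+1) := one_le_pow₀ h1W
    have hexp : V * W t ^ (ν+1) + δ ≤ V' * W t ^ (ν+1) := by
      rw [hV'def]
      nlinarith
    have h6 := mul_le_mul_of_nonneg_left hexp hη
    linarith
  have hmain := harris_engine ν L V hV0 hV v hv r hr W δ hδ hW1 hW2
  have hbr : 1 - c * r = 1/((ν:ℝ)+1) := by
    rw [hcr]
    field_simp
    ring
  have hWr : W r = ((ν:ℝ)+1) ^ (1/(ν:ℝ)) := by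
    show (1 - c*r) ^ p = _
    rw [hbr, one_div, Real.inv_rpow (by positivity), ← Real.rpow_neg (by positivity), hpdef,
      neg_neg]
  have hpow1 : ((ν:ℝ)+1) ^ (1/(ν:ℝ)) * ((ν:ℝ)+1) = ((ν:ℝ)+1) ^ (((ν:ℝ)+1)/(ν:ℝ)) := by
    have e : (((ν:ℝ)+1)/(ν:ℝ)) = 1/(ν:ℝ) + 1 := by field_simp; ring
    rw [e, Real.rpow_add (by positivity), Real.rpow_one]
  have hfinal : W r / r = ((ν:ℝ)+1) ^ (((ν:ℝ)+1)/(ν:ℝ)) * V' := by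
    calc W r / r = ((ν:ℝ)+1) ^ (1/(ν:ℝ)) / (1 / (((ν:ℝ)+1) * V')) := by rw [hWr, hrdef]
      _ = ((ν:ℝ)+1) ^ (1/(ν:ℝ)) * (((ν:ℝ)+1) * V') := by
          field_simp
      _ = (((ν:ℝ)+1) ^ (1/(ν:ℝ)) * ((ν:ℝ)+1)) * V' := by ring
      _ = ((ν:ℝ)+1) ^ (((ν:ℝ)+1)/(ν:ℝ)) * V' := by rw [hpow1]
  rw [hfinal] at hmain
  exact hmain

lemma harris_lin_step {X : Type*} [NormedAddCommGroup X] [NormedSpace ℂ X]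
    (T : X →L[ℂ] X) (V : ℝ) (hV0 : 0 ≤ V)
    (hV : ∀ z : X, ‖z‖ = 1 → ∀ f : X →L[ℂ] ℂ, ‖f‖ = 1 → f z = 1 → ‖f (T z)‖ ≤ V)
    (v : X) (hv : ‖v‖ = 1) (δ : ℝ) (hδ : 0 < δ) :
    ‖T v‖ ≤ Real.exp 1 * (V + δ) := by
  set L := (ContinuousMultilinearMap.ofSubsingleton ℂ X X (0 : Fin 1)) T with hLdef
  have hL : ∀ w : X, (L fun _ => w) = T w := by
    intro w
    simp [hLdef]
  set V' := V + δ with hV'def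
  have hV'0 : 0 < V' := by rw [hV'def]; linarith
  set r : ℝ := 1 / V' with hrdef
  have hr : 0 < r := by rw [hrdef]; positivity
  set W : ℝ → ℝ := fun t => Real.exp (V' * t) with hWdef
  have hW1 : ∀ t, 0 ≤ t → t ≤ r → 1 ≤ W t := by
    intro t ht _
    exact Real.one_le_exp (by positivity)
  have hW2 : ∀ t η, 0 ≤ t → 0 ≤ η → t + η ≤ r →
      W t + η * (V * W t ^ (0+1) + δ) ≤ W (t + η) := by
    intro t η ht hη _
    have h1W : 1 ≤ W t := hW1 t ht (by linarith)
    have hWt0 : 0 < W t := by linarith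
    have hexp : V * W t + δ ≤ V' * W t := by
      rw [hV'def]
      nlinarith
    have h6 := mul_le_mul_of_nonneg_left hexp hη
    have hq : W t * (V' * η + 1) ≤ W t * Real.exp (V' * η) :=
      mul_le_mul_of_nonneg_left (Real.add_one_le_exp _) hWt0.le
    have hWadd : W (t+η) = W t * Real.exp (V' * η) := by
      show Real.exp (V' * (t + η)) = _
      rw [mul_add, Real.exp_add]
    rw [hWadd, pow_one]
    nlinarith
  have hV2 : ∀ z : X, ‖z‖ = 1 → ∀ f : X →L[ℂ] ℂ, ‖f‖ = 1 → f z = 1 →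
      ‖f (L fun _ => z)‖ ≤ V := by
    intro z hz f hf1 hfz
    rw [hL]
    exact hV z hz f hf1 hfz
  have hmain := harris_engine 0 L V hV0 hV2 v hv r hr W δ hδ hW1 hW2
  rw [hL] at hmain
  have hWr : W r / r = Real.exp 1 * V' := by
    have e1 : V' * r = 1 := by
      rw [hrdef]
      field_simp
    show Real.exp (V' * r) / r = _
    rw [e1, hrdef]
    field_simp
  rw [hWr] at hmain
  exact hmain

theorem stmt14 {X : Type*} [NormedAddCommGroup X] [NormedSpace ℂ X]
    (m : ℕ) (hm : 2 ≤ m) (P : X → X)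
    (L : ContinuousMultilinearMap ℂ (fun _ : Fin m => X) X)
    (hP : ∀ v : X, P v = L (fun _ => v)) :
    (∀ v : X, ‖v‖ = 1 → ‖P v‖ ≤ (m : ℝ) ^ ((m : ℝ) / ((m : ℝ) - 1)) *
      sSup {x : ℝ | ∃ (w : X) (ws : X →L[ℂ] ℂ), ‖w‖ = 1 ∧ ws w = 1 ∧ ‖ws‖ = 1 ∧
        x = ‖ws (P w)‖}) ∧
    (∀ T : X →L[ℂ] X, ∀ v : X, ‖v‖ = 1 → ‖T v‖ ≤ Real.exp 1 *
      sSup {x : ℝ | ∃ (w : X) (ws : X →L[ℂ] ℂ), ‖w‖ = 1 ∧ ws w = 1 ∧ ‖ws‖ = 1 ∧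
        x = ‖ws (T w)‖}) := by
  constructor
  · intro v hv
    set S := {x : ℝ | ∃ (w : X) (ws : X →L[ℂ] ℂ), ‖w‖ = 1 ∧ ws w = 1 ∧ ‖ws‖ = 1 ∧
        x = ‖ws (P w)‖} with hSdef
    have hvne : v ≠ 0 := by
      intro h
      rw [h, norm_zero] at hv
      norm_num at hv
    obtain ⟨g, hg1, hg2⟩ := exists_dual_vector ℂ v (norm_ne_zero_iff.2 hvne)
    have hg2' : g v = 1 := by rw [hg2, hv]; norm_num
    have hmem : ‖g (P v)‖ ∈ S := ⟨v, g, hv, hg2', hg1, rfl⟩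
    have hbdd : BddAbove S := by
      refine ⟨‖L‖, ?_⟩
      rintro x ⟨w, ws, hw, hws1, hws2, rfl⟩
      calc ‖ws (P w)‖ ≤ ‖ws‖ * ‖P w‖ := ws.le_opNorm _
        _ = ‖P w‖ := by rw [hws2, one_mul]
        _ = ‖L fun _ => w‖ := by rw [hP]
        _ ≤ ‖L‖ * ∏ _i : Fin m, ‖w‖ := L.le_opNorm _
        _ = ‖L‖ := by rw [hw]; simp
    have hV0 : 0 ≤ sSup S := le_trans (norm_nonneg _) (le_csSup hbdd hmem)
    have hVs : ∀ z : X, ‖z‖ = 1 → ∀ f : X →L[ℂ] ℂ, ‖f‖ = 1 → f z = 1 →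
        ‖f (L fun _ => z)‖ ≤ sSup S := by
      intro z hz f hf1 hfz
      refine le_csSup hbdd ⟨z, f, hz, hfz, hf1, ?_⟩
      rw [hP]
    obtain ⟨ν, rfl⟩ : ∃ ν, m = ν + 1 := ⟨m - 1, (Nat.succ_pred_eq_of_pos (by omega)).symm⟩
    have hν : 1 ≤ ν := by omega
    have hν0 : (0:ℝ) < (ν:ℝ) := by exact_mod_cast hν
    have hKeq : ((ν+1:ℕ):ℝ) ^ (((ν+1:ℕ):ℝ)/(((ν+1:ℕ):ℝ)-1))
        = ((ν:ℝ)+1) ^ (((ν:ℝ)+1)/(ν:ℝ)) := by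
      congr 1
      · push_cast; ring
      · push_cast; ring
    have hK0 : (0:ℝ) < ((ν:ℝ)+1) ^ (((ν:ℝ)+1)/(ν:ℝ)) :=
      Real.rpow_pos_of_pos (by positivity) _
    rw [hP v, hKeq]
    refine le_of_forall_pos_le_add ?_
    intro ε hε
    have hδ : 0 < ε / (((ν:ℝ)+1) ^ (((ν:ℝ)+1)/(ν:ℝ))) := by positivity
    have hstep := harris_poly_step ν hν L (sSup S) hV0 hVs v hv _ hδ
    refine hstep.trans ?_
    rw [mul_add]
    have : ((ν:ℝ)+1) ^ (((ν:ℝ)+1)/(ν:ℝ)) * (ε / (((ν:ℝ)+1) ^ (((ν:ℝ)+1)/(ν:ℝ)))) = ε := by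
      field_simp
    rw [this]
  · intro T v hv
    set S := {x : ℝ | ∃ (w : X) (ws : X →L[ℂ] ℂ), ‖w‖ = 1 ∧ ws w = 1 ∧ ‖ws‖ = 1 ∧
        x = ‖ws (T w)‖} with hSdef
    have hvne : v ≠ 0 := by
      intro h
      rw [h, norm_zero] at hv
      norm_num at hv
    obtain ⟨g, hg1, hg2⟩ := exists_dual_vector ℂ v (norm_ne_zero_iff.2 hvne)
    have hg2' : g v = 1 := by rw [hg2, hv]; norm_num
    have hmem : ‖g (T v)‖ ∈ S := ⟨v, g, hv, hg2', hg1, rfl⟩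
    have hbdd : BddAbove S := by
      refine ⟨‖T‖, ?_⟩
      rintro x ⟨w, ws, hw, hws1, hws2, rfl⟩
      calc ‖ws (T w)‖ ≤ ‖ws‖ * ‖T w‖ := ws.le_opNorm _
        _ = ‖T w‖ := by rw [hws2, one_mul]
        _ ≤ ‖T‖ * ‖w‖ := T.le_opNorm _
        _ = ‖T‖ := by rw [hw, mul_one]
    have hV0 : 0 ≤ sSup S := le_trans (norm_nonneg _) (le_csSup hbdd hmem)
    have hVs : ∀ z : X, ‖z‖ = 1 → ∀ f : X →L[ℂ] ℂ, ‖f‖ = 1 → f z = 1 →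
        ‖f (T z)‖ ≤ sSup S := by
      intro z hz f hf1 hfz
      exact le_csSup hbdd ⟨z, f, hz, hfz, hf1, rfl⟩
    refine le_of_forall_pos_le_add ?_
    intro ε hε
    have he0 : (0:ℝ) < Real.exp 1 := Real.exp_pos 1
    have hδ : 0 < ε / Real.exp 1 := by positivity
    have hstep := harris_lin_step T (sSup S) hV0 hVs v hv _ hδ
    refine hstep.trans ?_
    rw [mul_add]
    have : Real.exp 1 * (ε / Real.exp 1) = ε := by field_simp
    rw [this]
end

section
/- Let g : 𝔻 → ℂ be holomorphic with g(ζ) = g(0) − conj(g(0))ζ² − ζq(ζ), Re q ≥ 0 on 𝔻. Then for all ζ ∈ 𝔻: |g(ζ) − g(0)| ≤ 4|ζ|²·|g(0)| + e·|ζ|·|g'(0)| − 8·Re(g'(0))·|ζ|²·(1 − |ζ|·ln 2)/(1 − |ζ|)². -/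
open Complex Metric

lemma abs_sub_lt (a b : ℂ) (ha : 0 < a.re) (hb : 0 < b.re) :
    ‖a - b‖ < ‖a + (starRingEnd ℂ) b‖ := by
  have h : Complex.normSq (a - b) < Complex.normSq (a + (starRingEnd ℂ) b) := by
    simp only [Complex.normSq_apply, Complex.sub_re, Complex.sub_im, Complex.add_re,
      Complex.add_im, Complex.conj_re, Complex.conj_im]
    nlinarith [mul_pos ha hb]
  have := Complex.sq_norm (a - b)
  have := Complex.sq_norm (a + (starRingEnd ℂ) b)
  nlinarith [norm_nonneg (a - b), norm_nonneg (a + (starRingEnd ℂ) b)]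

lemma cara_pos (p : ℂ → ℂ) (hp : DifferentiableOn ℂ p (ball 0 1))
    (hre : ∀ ζ ∈ ball (0:ℂ) 1, 0 < (p ζ).re) :
    ∀ z ∈ ball (0:ℂ) 1, (1 - ‖z‖) * ‖p z - p 0‖ ≤ 2 * (p 0).re * ‖z‖ := by
  intro z hz
  have h0 : (0:ℂ) ∈ ball (0:ℂ) 1 := by simp
  set d : ℂ → ℂ := fun w => p w + (starRingEnd ℂ) (p 0) with hd
  have hdne : ∀ w ∈ ball (0:ℂ) 1, d w ≠ 0 := by
    intro w hw h
    have : 0 < (d w).re := by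
      simp only [hd, Complex.add_re, Complex.conj_re]
      exact add_pos (hre w hw) (hre 0 h0)
    rw [h] at this; simp at this
  set f : ℂ → ℂ := fun w => (p w - p 0) / d w with hf
  have hdf : DifferentiableOn ℂ f (ball 0 1) :=
    ((hp.sub_const (p 0)).div (hp.add_const _) hdne)
  have hmaps : Set.MapsTo f (ball (0:ℂ) 1) (ball (0:ℂ) 1) := by
    intro w hw
    rw [mem_ball_zero_iff]
    have hlt := abs_sub_lt (p w) (p 0) (hre w hw) (hre 0 h0)
    have hdpos : 0 < ‖d w‖ := by
      simpa using (norm_pos_iff.mpr (hdne w hw))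
    rw [hf]
    simp only [norm_div]
    rw [div_lt_one hdpos]
    exact hlt
  have hf0 : f 0 = 0 := by simp [hf]
  have hsch := Complex.norm_le_norm_of_mapsTo_ball (z := z) hdf (hmaps.mono_right ball_subset_closedBall) hf0
    (by rwa [← mem_ball_zero_iff])
  -- ‖p z - p 0‖ = ‖f z‖ * ‖d z‖
  have hmul : ‖p z - p 0‖ = ‖f z‖ * ‖d z‖ := by
    rw [← norm_mul]
    congr 1
    rw [hf]
    field_simp [hdne z hz]
  have hdle : ‖d z‖ ≤ ‖p z - p 0‖ + 2 * (p 0).re := by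
    have : d z = (p z - p 0) + (p 0 + (starRingEnd ℂ) (p 0)) := by rw [hd]; ring
    rw [this]
    calc ‖(p z - p 0) + (p 0 + (starRingEnd ℂ) (p 0))‖
        ≤ ‖p z - p 0‖ + ‖p 0 + (starRingEnd ℂ) (p 0)‖ := by
          exact norm_add_le _ _
      _ = ‖p z - p 0‖ + 2 * (p 0).re := by
          rw [Complex.add_conj, Complex.norm_real, Real.norm_eq_abs,
            abs_of_pos (by linarith [hre 0 h0] : (0:ℝ) < 2 * (p 0).re)]
  have hz1 : ‖z‖ < 1 := mem_ball_zero_iff.mp hz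
  have h1 : ‖p z - p 0‖ ≤ ‖z‖ * (‖p z - p 0‖ + 2 * (p 0).re) :=
    calc ‖p z - p 0‖ = ‖f z‖ * ‖d z‖ := hmul
      _ ≤ ‖z‖ * (‖p z - p 0‖ + 2 * (p 0).re) :=
        mul_le_mul hsch hdle (norm_nonneg _) (norm_nonneg z)
  nlinarith [norm_nonneg (p z - p 0), norm_nonneg z]

lemma cara (q : ℂ → ℂ) (hq : DifferentiableOn ℂ q (ball 0 1))
    (hre : ∀ ζ ∈ ball (0:ℂ) 1, 0 ≤ (q ζ).re) :
    ∀ z ∈ ball (0:ℂ) 1, (1 - ‖z‖) * ‖q z - q 0‖ ≤ 2 * (q 0).re * ‖z‖ := by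
  intro z hz
  have key : ∀ ε : ℝ, 0 < ε →
      (1 - ‖z‖) * ‖q z - q 0‖ ≤ 2 * (q 0).re * ‖z‖ + 2 * ε := by
    intro ε hε
    have h := cara_pos (fun w => q w + (ε:ℂ)) (hq.add_const _)
      (fun w hw => by simpa using lt_add_of_le_of_pos (hre w hw) hε) z hz
    simp only [add_sub_add_right_eq_sub, Complex.add_re, Complex.ofReal_re] at h
    have hz1 : ‖z‖ < 1 := mem_ball_zero_iff.mp hz
    nlinarith [norm_nonneg z, hre 0 (by simp : (0:ℂ) ∈ ball (0:ℂ) 1)]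
  by_contra hcon
  push_neg at hcon
  have := key ((((1 - ‖z‖) * ‖q z - q 0‖) - 2 * (q 0).re * ‖z‖) / 4) (by linarith)
  linarith

theorem stmt15 (g q : ℂ → ℂ)
    (hg : DifferentiableOn ℂ g (ball 0 1))
    (hq : DifferentiableOn ℂ q (ball 0 1))
    (hrep : ∀ ζ ∈ ball (0:ℂ) 1, g ζ = g 0 - (starRingEnd ℂ) (g 0) * ζ ^ 2 - ζ * q ζ)
    (hre : ∀ ζ ∈ ball (0:ℂ) 1, 0 ≤ (q ζ).re) :
    ∀ ζ ∈ ball (0:ℂ) 1,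
      ‖g ζ - g 0‖ ≤ 4 * ‖ζ‖ ^ 2 * ‖g 0‖ + Real.exp 1 * ‖ζ‖ * ‖deriv g 0‖
        - 8 * (deriv g 0).re * ‖ζ‖ ^ 2 * (1 - ‖ζ‖ * Real.log 2) / (1 - ‖ζ‖) ^ 2 := by
  have h0 : (0:ℂ) ∈ ball (0:ℂ) 1 := by simp
  -- deriv g 0 = - q 0
  have hd : deriv g 0 = -(q 0) := by
    have hmem : ball (0:ℂ) 1 ∈ nhds (0:ℂ) := isOpen_ball.mem_nhds h0
    have hev : g =ᶠ[nhds (0:ℂ)] fun ζ => g 0 - (starRingEnd ℂ) (g 0) * ζ ^ 2 - ζ * q ζ :=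
      Filter.eventually_of_mem hmem hrep
    have hqd : HasDerivAt q (deriv q 0) 0 :=
      ((hq.differentiableAt hmem).hasDerivAt)
    have h1 : HasDerivAt (fun ζ : ℂ => g 0 - (starRingEnd ℂ) (g 0) * ζ ^ 2 - ζ * q ζ)
        (-(q 0)) 0 := by
      have hA : HasDerivAt (fun ζ : ℂ => (starRingEnd ℂ) (g 0) * ζ ^ 2)
          ((starRingEnd ℂ) (g 0) * (2 * 0)) 0 := by
        simpa using ((hasDerivAt_pow 2 (0:ℂ)).const_mul ((starRingEnd ℂ) (g 0)))
      have hB : HasDerivAt (fun ζ : ℂ => ζ * q ζ) (1 * q 0 + 0 * deriv q 0) 0 :=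
        (hasDerivAt_id 0).mul hqd
      have := ((hasDerivAt_const (0:ℂ) (g 0)).sub hA).sub hB
      exact this.congr_deriv (by ring)
    rw [(h1.congr_of_eventuallyEq hev).deriv]
  intro ζ hζ
  have hr1 : ‖ζ‖ < 1 := mem_ball_zero_iff.mp hζ
  have hr0 : (0:ℝ) ≤ ‖ζ‖ := norm_nonneg ζ
  set r := ‖ζ‖
  have hA : (0:ℝ) ≤ (q 0).re := hre 0 h0
  have hcara := cara q hq hre ζ hζ
  -- bound for ‖g ζ - g 0‖
  have key : ‖g ζ - g 0‖ ≤ r ^ 2 * ‖g 0‖ + r * ‖q 0‖ + r * ‖q ζ - q 0‖ := by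
    have : g ζ - g 0 = -((starRingEnd ℂ) (g 0) * ζ ^ 2) - ζ * (q 0) - ζ * (q ζ - q 0) := by
      rw [hrep ζ hζ]; ring
    rw [this]
    calc ‖-((starRingEnd ℂ) (g 0) * ζ ^ 2) - ζ * (q 0) - ζ * (q ζ - q 0)‖
        ≤ ‖-((starRingEnd ℂ) (g 0) * ζ ^ 2) - ζ * (q 0)‖ + ‖ζ * (q ζ - q 0)‖ :=
          norm_sub_le _ _
      _ ≤ ‖-((starRingEnd ℂ) (g 0) * ζ ^ 2)‖ + ‖ζ * (q 0)‖ + ‖ζ * (q ζ - q 0)‖ := by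
          linarith [norm_sub_le (-((starRingEnd ℂ) (g 0) * ζ ^ 2)) (ζ * (q 0))]
      _ = r ^ 2 * ‖g 0‖ + r * ‖q 0‖ + r * ‖q ζ - q 0‖ := by
          simp only [norm_neg, norm_mul, norm_pow, RCLike.norm_conj]
          ring
  rw [hd]
  simp only [norm_neg, Complex.neg_re]
  -- Now pure real arithmetic
  have hln2 : Real.log 2 < 0.6931471808 := Real.log_two_lt_d9
  have hln2' : (0:ℝ) < Real.log 2 := Real.log_pos (by norm_num)
  have he : (2.7182818283:ℝ) < Real.exp 1 := Real.exp_one_gt_d9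
  have hq0 : (0:ℝ) ≤ ‖q 0‖ := norm_nonneg _
  have hg0 : (0:ℝ) ≤ ‖g 0‖ := norm_nonneg _
  have hNn : (0:ℝ) ≤ ‖q ζ - q 0‖ := norm_nonneg _
  have h1r : (0:ℝ) < 1 - r := by linarith
  -- key step: r * ‖q ζ - q 0‖ ≤ 2 (q0).re r^2/(1-r) ≤ 8 (q0).re r^2 (1 - r log 2)/(1-r)^2
  have step : r * ‖q ζ - q 0‖ ≤ 8 * (q 0).re * r ^ 2 * (1 - r * Real.log 2) / (1 - r) ^ 2 := by
    have h2 : r * ‖q ζ - q 0‖ ≤ 2 * (q 0).re * r ^ 2 / (1 - r) := by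
      rw [le_div_iff₀ h1r]
      nlinarith [mul_le_mul_of_nonneg_left hcara hr0]
    refine h2.trans ?_
    rw [div_le_div_iff₀ h1r (by positivity)]
    nlinarith [mul_nonneg (mul_nonneg hA (sq_nonneg r)) (mul_nonneg hr0 h1r.le),
      mul_nonneg (mul_nonneg hA (sq_nonneg r)) h1r.le, sq_nonneg r]
  have hneg : 8 * -(q 0).re * r ^ 2 * (1 - r * Real.log 2) / (1 - r) ^ 2
      = -(8 * (q 0).re * r ^ 2 * (1 - r * Real.log 2) / (1 - r) ^ 2) := by ring
  rw [hneg]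
  nlinarith [key, step,
    mul_le_mul_of_nonneg_right (by linarith : (1:ℝ) ≤ Real.exp 1) (mul_nonneg hr0 hq0),
    mul_nonneg (sq_nonneg r) hg0]
end
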